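/- arXiv:math/0307164 — 6 statements merged into one kernel-verified Lean document; each statement's English description precedes it below -/
import Mathlib

section
/- Let N be a free ℤ-module of finite rank n ≥ 2 with a symmetric bilinear form (−,−) whose ℝ-linear extension to N ⊗ ℝ is nondegenerate of signature (2, n−2), extended ℂ-bilinearly to N ⊗ ℂ, let Δ = { δ ∈ N : (δ,δ) = −2 }, and let ‖·‖ be any norm on N ⊗ ℂ. Suppose Ω ∈ N ⊗ ℂ is a vector whose real and imaginary parts span a positive definite two-plane in N ⊗ ℝ and which satisfies (Ω,δ) ≠ 0 for all δ ∈ Δ. Then there is a constant r > 0 such that |(u,v)| ≤ r·‖u‖·|(Ω,v)| holds for all u ∈ N ⊗ ℂ and all v which either lie in N ⊗ ℝ with (v,v) ≥ 0 or lie in Δ. -/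
/-!
STATEMENT 10 (Lemma 6.2 of the paper): a uniform bound `|(u,v)| ≤ r‖u‖|(Ω,v)|` for
vectors `v` with `(v,v) ≥ 0` and for roots `v ∈ Δ`, where `Ω` spans a positive
definite two-plane and is orthogonal to no root.

The free ℤ-module `N` of rank `n` is realised as `Fin n → ℤ`, with `N ⊗ ℝ = Fin n → ℝ`
and `N ⊗ ℂ = Fin n → ℂ`; the symmetric bilinear form is given by an integer matrix `M`,
extended ℝ- and ℂ-bilinearly.
-/

open scoped BigOperators

noncomputable section

/-- The ℝ-bilinear extension of the form given by the integer matrix `M`. -/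
def bR {n : ℕ} (M : Matrix (Fin n) (Fin n) ℤ) (u v : Fin n → ℝ) : ℝ :=
  ∑ i, ∑ j, (M i j : ℝ) * u i * v j

/-- The ℂ-bilinear extension of the form given by the integer matrix `M`. -/
def bC {n : ℕ} (M : Matrix (Fin n) (Fin n) ℤ) (u v : Fin n → ℂ) : ℂ :=
  ∑ i, ∑ j, (M i j : ℂ) * u i * v j

/-- The inclusion `N ⊗ ℝ → N ⊗ ℂ`. -/
def toC {n : ℕ} (v : Fin n → ℝ) : Fin n → ℂ := fun i => (v i : ℂ)

/-- The real part of a vector in `N ⊗ ℂ`, as a vector in `N ⊗ ℝ`. -/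
def reOf {n : ℕ} (u : Fin n → ℂ) : Fin n → ℝ := fun i => (u i).re

/-- The imaginary part of a vector in `N ⊗ ℂ`, as a vector in `N ⊗ ℝ`. -/
def imOf {n : ℕ} (u : Fin n → ℂ) : Fin n → ℝ := fun i => (u i).im


/-- The integral form given by the integer matrix `M` on `N = Fin n → ℤ`. -/
def bZ {n : ℕ} (M : Matrix (Fin n) (Fin n) ℤ) (u v : Fin n → ℤ) : ℤ :=
  ∑ i, ∑ j, M i j * u i * v j

/-- The inclusion `N → N ⊗ ℂ`. -/
def intToC {n : ℕ} (v : Fin n → ℤ) : Fin n → ℂ := fun i => (v i : ℂ)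

/-- The inclusion `N → N ⊗ ℝ`. -/
def intToR {n : ℕ} (v : Fin n → ℤ) : Fin n → ℝ := fun i => (v i : ℝ)


namespace ST10

variable {n : ℕ} (M : Matrix (Fin n) (Fin n) ℤ)

def myB : (Fin n → ℝ) →ₗ[ℝ] (Fin n → ℝ) →ₗ[ℝ] ℝ :=
  LinearMap.mk₂ ℝ (bR M)
    (fun u u' v => by
      simp only [bR, Pi.add_apply]
      rw [← Finset.sum_add_distrib]
      refine Finset.sum_congr rfl fun i _ => ?_
      rw [← Finset.sum_add_distrib]
      exact Finset.sum_congr rfl fun j _ => by ring)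
    (fun c u v => by
      simp only [bR, Pi.smul_apply, smul_eq_mul]
      rw [Finset.mul_sum]
      refine Finset.sum_congr rfl fun i _ => ?_
      rw [Finset.mul_sum]
      exact Finset.sum_congr rfl fun j _ => by ring)
    (fun u v v' => by
      simp only [bR, Pi.add_apply]
      rw [← Finset.sum_add_distrib]
      refine Finset.sum_congr rfl fun i _ => ?_
      rw [← Finset.sum_add_distrib]
      exact Finset.sum_congr rfl fun j _ => by ring)
    (fun c u v => by
      simp only [bR, Pi.smul_apply, smul_eq_mul]
      rw [Finset.mul_sum]
      refine Finset.sum_congr rfl fun i _ => ?_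
      rw [Finset.mul_sum]
      exact Finset.sum_congr rfl fun j _ => by ring)

@[simp] lemma myB_apply (u v : Fin n → ℝ) : myB M u v = bR M u v := rfl

lemma bR_symm (hsymm : ∀ i j, M i j = M j i) (u v : Fin n → ℝ) :
    bR M u v = bR M v u := by
  rw [bR, bR, Finset.sum_comm]
  refine Finset.sum_congr rfl fun j _ => Finset.sum_congr rfl fun i _ => ?_
  rw [hsymm i j]; ring

lemma bR_smul_right (u v : Fin n → ℝ) (t : ℝ) :
    bR M u (t • v) = t * bR M u v := by
  calc bR M u (t • v) = myB M u (t • v) := rfl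
    _ = t • myB M u v := map_smul _ _ _
    _ = t * bR M u v := rfl

lemma bR_expand (e : Module.Basis (Fin n) ℝ (Fin n → ℝ)) (w : Fin n → ℝ) :
    bR M w w = ∑ i, ∑ j, e.repr w i * e.repr w j * bR M (e i) (e j) := by
  conv_lhs => rw [show w = ∑ i, e.repr w i • e i from (e.sum_repr w).symm]
  rw [show bR M = fun u v => myB M u v from rfl]
  simp only [map_sum, LinearMap.sum_apply, map_smul, LinearMap.smul_apply, smul_eq_mul,
    myB_apply, Finset.mul_sum]
  rw [Finset.sum_comm]
  exact Finset.sum_congr rfl fun i _ => Finset.sum_congr rfl fun j _ => by ring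


lemma bR_diag (e : Module.Basis (Fin n) ℝ (Fin n → ℝ))
    (he : ∀ i j, bR M (e i) (e j) =
      if i = j then (if (i : ℕ) < 2 then 1 else -1) else 0) (w : Fin n → ℝ) :
    bR M w w = ∑ i : Fin n, (if (i : ℕ) < 2 then (1:ℝ) else -1) * (e.repr w i)^2 := by
  rw [bR_expand M e w]
  refine Finset.sum_congr rfl fun i _ => ?_
  rw [show ∑ j, e.repr w i * e.repr w j * bR M (e i) (e j)
      = ∑ j, if i = j then e.repr w i * e.repr w j * (if (i:ℕ) < 2 then 1 else -1) else 0 from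
    Finset.sum_congr rfl fun j _ => by rw [he i j]; split <;> simp <;> ring]
  rw [Finset.sum_ite_eq]
  simp; ring

lemma bR_zero : bR M 0 0 = 0 := by simp [bR]

lemma key (hn : 2 ≤ n) (hsymm : ∀ i j, M i j = M j i)
    (e : Module.Basis (Fin n) ℝ (Fin n → ℝ))
    (he : ∀ i j, bR M (e i) (e j) =
      if i = j then (if (i : ℕ) < 2 then 1 else -1) else 0)
    (x y : Fin n → ℝ)
    (hP : ∀ a b : ℝ, ¬(a = 0 ∧ b = 0) → 0 < bR M (a • x + b • y) (a • x + b • y))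
    (v : Fin n → ℝ) (hv : 0 ≤ bR M v v) (hx : bR M x v = 0) (hy : bR M y v = 0) :
    v = 0 := by
  by_contra hv0
  -- the linear map c ↦ c 0 • x + c 1 • y + c 2 • v
  let L : (Fin 3 → ℝ) →ₗ[ℝ] (Fin n → ℝ) :=
    (LinearMap.proj 0).smulRight x + (LinearMap.proj 1).smulRight y
      + (LinearMap.proj 2).smulRight v
  have hL : ∀ c : Fin 3 → ℝ, L c = c 0 • x + c 1 • y + c 2 • v := fun c => rfl
  -- first two coordinates w.r.t. e
  let ψ : (Fin 3 → ℝ) →ₗ[ℝ] (Fin 2 → ℝ) :=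
    LinearMap.pi (fun k => (Finsupp.lapply (Fin.castLE hn k)) ∘ₗ (e.repr.toLinearMap ∘ₗ L))
  have hnotinj : ¬ Function.Injective ψ := by
    intro hinj
    have := LinearMap.finrank_le_finrank_of_injective hinj
    simp [Module.finrank_fintype_fun_eq_card] at this
  obtain ⟨a, b, hab, hne⟩ := Function.not_injective_iff.1 hnotinj
  set c : Fin 3 → ℝ := a - b with hc
  have hcne : c ≠ 0 := sub_ne_zero.2 hne
  have hψc : ψ c = 0 := by rw [hc, map_sub, hab, sub_self]
  set W : Fin n → ℝ := L c with hW
  have h01 : ∀ i : Fin n, (i : ℕ) < 2 → e.repr W i = 0 := by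
    intro i hi
    have := congrFun hψc ⟨i, hi⟩
    simpa [ψ, Fin.ext_iff] using this
  -- orthogonality of v against x and y implies q W ≥ 0
  have hpv : bR M (c 0 • x + c 1 • y) v = 0 := by
    have : myB M (c 0 • x + c 1 • y) v = 0 := by
      simp [map_add, map_smul, myB_apply, hx, hy]
    rwa [myB_apply] at this
  have hqW : 0 ≤ bR M W W := by
    have expand : bR M W W = bR M (c 0 • x + c 1 • y) (c 0 • x + c 1 • y)
        + 2 * (c 2 * bR M (c 0 • x + c 1 • y) v) + c 2 ^ 2 * bR M v v := by
      have : myB M W W = myB M (c 0 • x + c 1 • y) (c 0 • x + c 1 • y)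
          + 2 * (c 2 * myB M (c 0 • x + c 1 • y) v) + c 2 ^ 2 * myB M v v := by
        rw [hW, hL]
        have hs : myB M v (c 0 • x + c 1 • y) = myB M (c 0 • x + c 1 • y) v := by
          rw [myB_apply, myB_apply, bR_symm M hsymm]
        simp only [map_add, map_smul, LinearMap.add_apply, LinearMap.smul_apply, smul_eq_mul]
        rw [show ((myB M) v) x = ((myB M) x) v from by
              rw [myB_apply, myB_apply, bR_symm M hsymm],
            show ((myB M) v) y = ((myB M) y) v from by
              rw [myB_apply, myB_apply, bR_symm M hsymm]]
        ring
      simp only [myB_apply] at this; exact this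
    rw [expand, hpv]
    have hA : 0 ≤ bR M (c 0 • x + c 1 • y) (c 0 • x + c 1 • y) := by
      by_cases hc01 : c 0 = 0 ∧ c 1 = 0
      · rw [hc01.1, hc01.2]; simp [bR_zero M]
      · exact le_of_lt (hP _ _ hc01)
    have := mul_nonneg (sq_nonneg (c 2)) hv
    linarith
  -- q W ≤ 0 from the coordinates
  have hdiag := bR_diag M e he W
  have hterm : ∀ i : Fin n, i ∈ Finset.univ → (if (i : ℕ) < 2 then (1:ℝ) else -1) * (e.repr W i)^2 ≤ 0 := by
    intro i _
    by_cases hi : (i : ℕ) < 2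
    · rw [h01 i hi]; simp [hi]
    · simp only [hi, if_false]; nlinarith [sq_nonneg (e.repr W i)]
  have hsum0 : ∑ i : Fin n, (if (i : ℕ) < 2 then (1:ℝ) else -1) * (e.repr W i)^2 = 0 :=
    le_antisymm (Finset.sum_nonpos hterm) (by rw [← hdiag]; exact hqW)
  have hrepr : ∀ i : Fin n, e.repr W i = 0 := by
    intro i
    have := (Finset.sum_eq_zero_iff_of_nonpos hterm).1 hsum0 i (Finset.mem_univ i)
    by_cases hi : (i : ℕ) < 2
    · exact h01 i hi
    · simp only [hi, if_false] at this; nlinarith [sq_nonneg (e.repr W i)]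
  have hW0 : W = 0 := by
    have : e.repr W = 0 := Finsupp.ext hrepr
    exact (LinearEquiv.map_eq_zero_iff e.repr).1 this
  -- derive the contradiction
  rw [hW, hL] at hW0
  by_cases hc2 : c 2 = 0
  · have hc01 : ¬(c 0 = 0 ∧ c 1 = 0) := by
      rintro ⟨h0, h1⟩
      apply hcne
      funext k
      fin_cases k <;> simpa [h0, h1, hc2]
    have hpos := hP (c 0) (c 1) hc01
    rw [show c 0 • x + c 1 • y = 0 from by
      have := hW0; rw [hc2] at this; simpa using this] at hpos
    rw [bR_zero M] at hpos
    exact lt_irrefl 0 hpos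
  · -- v = a' • x + b' • y
    set a' : ℝ := (c 2)⁻¹ * (-(c 0)) with ha'
    set b' : ℝ := (c 2)⁻¹ * (-(c 1)) with hb'
    have hveq : v = a' • x + b' • y := by
      have h2 : ∀ i, c 2 * v i = -(c 0) * x i + -(c 1) * y i := by
        intro i
        have := congrFun hW0 i
        simp only [Pi.add_apply, Pi.smul_apply, smul_eq_mul, Pi.zero_apply] at this
        linarith
      funext i
      have := h2 i
      simp only [Pi.add_apply, Pi.smul_apply, smul_eq_mul, ha', hb']
      rw [show v i = (c 2)⁻¹ * (c 2 * v i) from by field_simp, this]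
      ring
    have hab' : ¬(a' = 0 ∧ b' = 0) := by
      rintro ⟨h0, h1⟩
      exact hv0 (by rw [hveq, h0, h1]; simp)
    have hpos := hP a' b' hab'
    rw [← hveq] at hpos
    have hq0 : bR M v v = 0 := by
      have h3 : myB M v v = myB M (a' • x + b' • y) v := by
        exact congrArg (fun w => myB M w v) hveq
      simp only [map_add, map_smul, LinearMap.add_apply, LinearMap.smul_apply,
        smul_eq_mul, myB_apply, hx, hy] at h3
      simpa using h3
    rw [hq0] at hpos
    exact lt_irrefl 0 hpos

lemma bC_bound (u v : Fin n → ℂ) :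
    ‖(bC M u v)‖ ≤ (∑ i, ∑ j, |(M i j : ℝ)|) * ‖u‖ * ‖v‖ := by
  rw [bC]
  calc ‖(∑ i, ∑ j, (M i j : ℂ) * u i * v j)‖
      ≤ ∑ i, ‖(∑ j, (M i j : ℂ) * u i * v j)‖ :=
        norm_sum_le _ _
    _ ≤ ∑ i, ∑ j, ‖((M i j : ℂ) * u i * v j)‖ :=
        Finset.sum_le_sum fun i _ => norm_sum_le _ _
    _ ≤ ∑ i, ∑ j, |(M i j : ℝ)| * ‖u‖ * ‖v‖ := by
        refine Finset.sum_le_sum fun i _ => Finset.sum_le_sum fun j _ => ?_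
        rw [norm_mul, norm_mul]
        have h1 : ‖(M i j : ℂ)‖ = |(M i j : ℝ)| := by
          rw [show ((M i j : ℤ) : ℂ) = ((M i j : ℝ) : ℂ) from by push_cast; ring,
            Complex.norm_real, Real.norm_eq_abs]
        have h2 : ‖(u i)‖ ≤ ‖u‖ := by
          exact norm_le_pi_norm u i
        have h3 : ‖(v j)‖ ≤ ‖v‖ := by
          exact norm_le_pi_norm v j
        rw [h1]
        gcongr
    _ = (∑ i, ∑ j, |(M i j : ℝ)|) * ‖u‖ * ‖v‖ := by
        rw [Finset.sum_mul, Finset.sum_mul]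
        exact Finset.sum_congr rfl fun i _ => by rw [Finset.sum_mul, Finset.sum_mul]

lemma norm_toC (v : Fin n → ℝ) : ‖toC v‖ = ‖v‖ := by
  rw [Pi.norm_def, Pi.norm_def]
  congr 1
  exact Finset.sup_congr rfl fun i _ => by simp [toC]

lemma bC_re (Ω : Fin n → ℂ) (v : Fin n → ℝ) :
    (bC M Ω (toC v)).re = bR M (reOf Ω) v ∧ (bC M Ω (toC v)).im = bR M (imOf Ω) v := by
  constructor
  · rw [bC, bR, Complex.re_sum]
    refine Finset.sum_congr rfl fun i _ => ?_
    rw [Complex.re_sum]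
    refine Finset.sum_congr rfl fun j _ => ?_
    simp [toC, reOf, Complex.mul_re, Complex.mul_im]
  · rw [bC, bR, Complex.im_sum]
    refine Finset.sum_congr rfl fun i _ => ?_
    rw [Complex.im_sum]
    refine Finset.sum_congr rfl fun j _ => ?_
    simp [toC, imOf, Complex.mul_re, Complex.mul_im]

lemma intToC_eq (δ : Fin n → ℤ) : intToC δ = toC (intToR δ) := by
  funext i; simp [intToC, toC, intToR]

lemma bZ_cast (δ : Fin n → ℤ) : bR M (intToR δ) (intToR δ) = (bZ M δ δ : ℝ) := by
  rw [bR, bZ]; push_cast [intToR]; ring_nf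


lemma seminorm_lower {n : ℕ} (hn : 1 ≤ n) (nrm : Seminorm ℂ (Fin n → ℂ))
    (hnrm : ∀ u : Fin n → ℂ, nrm u = 0 → u = 0) :
    ∃ ε : ℝ, 0 < ε ∧ ∀ u : Fin n → ℂ, ε * ‖u‖ ≤ nrm u := by
  -- nrm is Lipschitz w.r.t. the sup norm
  set C : ℝ := ∑ i : Fin n, nrm (fun j => if i = j then (1:ℂ) else 0) with hC
  have hbound : ∀ w : Fin n → ℂ, nrm w ≤ C * ‖w‖ := by
    intro w
    calc nrm w = nrm (∑ i : Fin n, w i • fun j => if i = j then (1:ℂ) else 0) := by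
          rw [← pi_eq_sum_univ w]
      _ ≤ ∑ i : Fin n, nrm (w i • fun j => if i = j then (1:ℂ) else 0) :=
          Finset.le_sum_of_subadditive _ (map_zero nrm).le (map_add_le_add nrm) _ _
      _ ≤ ∑ i : Fin n, ‖w‖ * nrm (fun j => if i = j then (1:ℂ) else 0) := by
          refine Finset.sum_le_sum fun i _ => ?_
          rw [map_smul_eq_mul]
          exact mul_le_mul_of_nonneg_right (norm_le_pi_norm w i) (apply_nonneg _ _)
      _ = C * ‖w‖ := by
          rw [hC, Finset.sum_mul]
          exact Finset.sum_congr rfl fun i _ => mul_comm _ _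
  have hcont : Continuous fun u : Fin n → ℂ => nrm u := by
    have hC0 : 0 ≤ C := Finset.sum_nonneg fun i _ => apply_nonneg _ _
    refine (LipschitzWith.of_dist_le_mul (K := C.toNNReal) fun a b => ?_).continuous
    rw [Real.dist_eq, dist_eq_norm]
    have h1 : nrm a - nrm b ≤ nrm (a - b) := by
      have := map_add_le_add nrm (a - b) b; simp at this; linarith
    have h2 : nrm b - nrm a ≤ nrm (b - a) := by
      have := map_add_le_add nrm (b - a) a; simp at this; linarith
    have h3 : nrm (b - a) = nrm (a - b) := by
      rw [show b - a = -(a-b) by ring, map_neg_eq_map]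
    rw [abs_le]
    have h4 := hbound (a - b)
    rw [Real.coe_toNNReal C hC0]
    constructor <;> linarith
  -- minimum on the unit sphere
  haveI : Nonempty (Fin n) := ⟨⟨0, hn⟩⟩
  have hsph : (Metric.sphere (0 : Fin n → ℂ) 1).Nonempty := by
    rw [NormedSpace.sphere_nonempty]; norm_num
  obtain ⟨z, hz, hzmin⟩ := (isCompact_sphere (0 : Fin n → ℂ) 1).exists_isMinOn hsph
    hcont.continuousOn
  have hz1 : ‖z‖ = 1 := by simpa using hz
  have hzpos : 0 < nrm z := by
    rcases (apply_nonneg nrm z).lt_or_eq with h | h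
    · exact h
    · exfalso
      have := hnrm z h.symm
      rw [this] at hz1; simp at hz1
  refine ⟨nrm z, hzpos, fun u => ?_⟩
  rcases eq_or_ne u 0 with rfl | hu
  · simp
  · have hnu : ‖u‖ ≠ 0 := norm_ne_zero_iff.2 hu
    have hpos : (0:ℝ) < ‖u‖ := lt_of_le_of_ne (norm_nonneg u) (Ne.symm hnu)
    have hmem : (((‖u‖⁻¹ : ℝ) : ℂ) • u) ∈ Metric.sphere (0 : Fin n → ℂ) 1 := by
      simp only [Metric.mem_sphere, dist_zero_right, norm_smul]
      rw [Complex.norm_real, Real.norm_eq_abs, abs_of_pos (by positivity)]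
      exact inv_mul_cancel₀ hnu
    have hle := hzmin hmem
    have heq : nrm (((‖u‖⁻¹ : ℝ) : ℂ) • u) = ‖u‖⁻¹ * nrm u := by
      rw [map_smul_eq_mul]
      rw [Complex.norm_real, Real.norm_eq_abs, abs_of_pos (by positivity)]
    have hle2 : nrm z ≤ ‖u‖⁻¹ * nrm u := by rw [← heq]; exact hle
    have hinv : ‖u‖⁻¹ * ‖u‖ = 1 := inv_mul_cancel₀ hnu
    have hfin : nrm z * ‖u‖ ≤ (‖u‖⁻¹ * nrm u) * ‖u‖ :=
      mul_le_mul_of_nonneg_right hle2 hpos.le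
    rw [mul_comm (‖u‖⁻¹) (nrm u), mul_assoc, hinv, mul_one] at hfin
    exact hfin

lemma bR_cont (u : Fin n → ℝ) : Continuous fun v => bR M u v := by
  unfold bR
  exact continuous_finset_sum _ fun i _ => continuous_finset_sum _ fun j _ =>
    continuous_const.mul (continuous_apply j)

lemma q_cont : Continuous fun v => bR M v v := by
  unfold bR
  exact continuous_finset_sum _ fun i _ => continuous_finset_sum _ fun j _ =>
    (continuous_const.mul (continuous_apply i)).mul (continuous_apply j)

lemma q_smul (hsymm : ∀ i j, M i j = M j i) (v : Fin n → ℝ) (t : ℝ) :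
    bR M (t • v) (t • v) = t^2 * bR M v v := by
  rw [bR_smul_right, bR_symm M hsymm, bR_smul_right, bR_symm M hsymm v]; ring

lemma core (hn : 2 ≤ n) (hsymm : ∀ i j, M i j = M j i)
    (e : Module.Basis (Fin n) ℝ (Fin n → ℝ))
    (he : ∀ i j, bR M (e i) (e j) =
      if i = j then (if (i : ℕ) < 2 then 1 else -1) else 0)
    (x y : Fin n → ℝ)
    (hP : ∀ a b : ℝ, ¬(a = 0 ∧ b = 0) → 0 < bR M (a • x + b • y) (a • x + b • y)) :
    ∃ ε : ℝ, 0 < ε ∧ ∃ η : ℝ, 0 < η ∧ ∀ v : Fin n → ℝ, ‖v‖ = 1 →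
      -η ≤ bR M v v → ε ≤ (bR M x v)^2 + (bR M y v)^2 := by
  set G : (Fin n → ℝ) → ℝ := fun v => (bR M x v)^2 + (bR M y v)^2 with hG
  have hGapp : ∀ v, G v = (bR M x v)^2 + (bR M y v)^2 := fun v => rfl
  have hGc : Continuous G := ((bR_cont M x).pow 2).add ((bR_cont M y).pow 2)
  have hGnonneg : ∀ v, 0 ≤ G v := fun v => by rw [hGapp]; positivity
  clear_value G
  have hqc : Continuous fun v => bR M v v := q_cont M
  set A₀ : Set (Fin n → ℝ) := Metric.sphere 0 1 ∩ {v | 0 ≤ bR M v v} with hA₀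
  have hA₀c : IsCompact A₀ :=
    (isCompact_sphere 0 1).inter_right (isClosed_le continuous_const hqc)
  have hxx : 0 < bR M x x := by
    have := hP 1 0 (by norm_num)
    simpa using this
  have hxne : x ≠ 0 := by
    intro h; rw [h] at hxx; rw [bR_zero] at hxx; exact lt_irrefl 0 hxx
  have hxnorm : (0:ℝ) < ‖x‖ := norm_pos_iff.2 hxne
  have hA₀ne : A₀.Nonempty := by
    refine ⟨‖x‖⁻¹ • x, ?_, ?_⟩
    · simp [norm_smul, abs_of_pos (inv_pos.2 hxnorm), inv_mul_cancel₀ hxnorm.ne']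
    · rw [Set.mem_setOf_eq, q_smul M hsymm]
      positivity
  obtain ⟨v₀, hv₀, hmin⟩ := hA₀c.exists_isMinOn hA₀ne hGc.continuousOn
  have hv₀1 : ‖v₀‖ = 1 := by
    have := hv₀.1; simpa using this
  have hGv₀ : 0 < G v₀ := by
    rcases lt_or_eq_of_le (hGnonneg v₀) with h | h
    · exact h
    · exfalso
      have h' : bR M x v₀ ^ 2 + bR M y v₀ ^ 2 = 0 := by rw [← hGapp]; exact h.symm
      have hx1 : bR M x v₀ ^ 2 = 0 := by
        nlinarith [sq_nonneg (bR M x v₀), sq_nonneg (bR M y v₀)]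
      have hy1 : bR M y v₀ ^ 2 = 0 := by
        nlinarith [sq_nonneg (bR M x v₀), sq_nonneg (bR M y v₀)]
      have hx0 : bR M x v₀ = 0 ∧ bR M y v₀ = 0 :=
        ⟨(pow_eq_zero_iff two_ne_zero).1 hx1, (pow_eq_zero_iff two_ne_zero).1 hy1⟩
      have := key M hn hsymm e he x y hP v₀ hv₀.2 hx0.1 hx0.2
      rw [this] at hv₀1; simp at hv₀1
  set A₁ : Set (Fin n → ℝ) := Metric.sphere 0 1 ∩ {v | G v ≤ G v₀ / 2} with hA₁
  have hA₁c : IsCompact A₁ :=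
    (isCompact_sphere 0 1).inter_right (isClosed_le hGc continuous_const)
  by_cases hA₁ne : A₁.Nonempty
  · obtain ⟨w₀, hw₀, hmax⟩ := hA₁c.exists_isMaxOn hA₁ne hqc.continuousOn
    have hqw : bR M w₀ w₀ < 0 := by
      by_contra hq
      push_neg at hq
      have hmem : w₀ ∈ A₀ := ⟨hw₀.1, hq⟩
      have h1 : G v₀ ≤ G w₀ := hmin hmem
      have h2 : G w₀ ≤ G v₀ / 2 := hw₀.2
      linarith
    refine ⟨G v₀ / 2, by linarith, -(bR M w₀ w₀) / 2, by linarith, fun v hv hqv => ?_⟩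
    rw [← hGapp v]
    by_contra hGv
    push_neg at hGv
    have hmem : v ∈ A₁ := ⟨by simpa using hv, le_of_lt hGv⟩
    have hle : bR M v v ≤ bR M w₀ w₀ := hmax hmem
    linarith
  · refine ⟨G v₀ / 2, by linarith, 1, one_pos, fun v hv _ => ?_⟩
    rw [← hGapp v]
    by_contra hGv
    push_neg at hGv
    exact hA₁ne ⟨v, ⟨by simpa using hv, le_of_lt hGv⟩⟩

lemma cone_bound (hsymm : ∀ i j, M i j = M j i) (x y : Fin n → ℝ) (ε η : ℝ)
    (hε : 0 < ε) (hη : 0 < η)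
    (hcore : ∀ v : Fin n → ℝ, ‖v‖ = 1 → -η ≤ bR M v v →
      ε ≤ (bR M x v)^2 + (bR M y v)^2)
    (v : Fin n → ℝ) (hv : -η * ‖v‖^2 ≤ bR M v v) :
    ε * ‖v‖^2 ≤ (bR M x v)^2 + (bR M y v)^2 := by
  rcases eq_or_ne v 0 with rfl | hne
  · have h0 : ε * ‖(0 : Fin n → ℝ)‖^2 = 0 := by simp
    rw [h0]
    positivity
  · have hnv : (0:ℝ) < ‖v‖ := norm_pos_iff.2 hne
    set t : ℝ := ‖v‖⁻¹ with ht
    have htpos : 0 < t := inv_pos.2 hnv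
    have h1 : ‖t • v‖ = 1 := by
      rw [norm_smul, ht, Real.norm_eq_abs, abs_of_pos htpos, inv_mul_cancel₀ hnv.ne']
    have h2 : -η ≤ bR M (t • v) (t • v) := by
      rw [q_smul M hsymm]
      have ht2 : t^2 * ‖v‖^2 = 1 := by
        rw [ht]; field_simp
      have := mul_le_mul_of_nonneg_left hv (le_of_lt (by positivity : (0:ℝ) < t^2))
      calc -η = t^2 * (-η * ‖v‖^2) := by rw [show t^2 * (-η * ‖v‖^2) = -η * (t^2 * ‖v‖^2) by ring, ht2]; ring
        _ ≤ t^2 * bR M v v := this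
    have h3 := hcore (t • v) h1 h2
    rw [bR_smul_right, bR_smul_right] at h3
    have ht2 : t^2 * ‖v‖^2 = 1 := by rw [ht]; field_simp
    have := mul_le_mul_of_nonneg_left h3 (le_of_lt (by positivity : (0:ℝ) < ‖v‖^2))
    calc ε * ‖v‖^2 = ‖v‖^2 * ε := by ring
      _ ≤ ‖v‖^2 * ((t * bR M x v)^2 + (t * bR M y v)^2) := this
      _ = (t^2 * ‖v‖^2) * ((bR M x v)^2 + (bR M y v)^2) := by ring
      _ = (bR M x v)^2 + (bR M y v)^2 := by rw [ht2, one_mul]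

lemma small_roots_finite (R : ℝ) :
    {δ : Fin n → ℤ | bZ M δ δ = -2 ∧ ‖intToR δ‖ ≤ R}.Finite := by
  have hsub : {δ : Fin n → ℤ | bZ M δ δ = -2 ∧ ‖intToR δ‖ ≤ R} ⊆
      Set.pi Set.univ (fun _ : Fin n => Set.Icc (-⌈R⌉) ⌈R⌉) := by
    rintro δ ⟨-, hδ⟩ i -
    have h1 : |(δ i : ℝ)| ≤ R := by
      have := norm_le_pi_norm (intToR δ) i
      rw [Real.norm_eq_abs] at this
      exact le_trans this hδ
    have h2 : ((|δ i| : ℤ) : ℝ) ≤ ((⌈R⌉ : ℤ) : ℝ) := by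
      push_cast
      exact le_trans h1 (Int.le_ceil R)
    have h3 : |δ i| ≤ ⌈R⌉ := by exact_mod_cast h2
    exact Set.mem_Icc.2 (abs_le.1 h3)
  exact Set.Finite.subset (Set.Finite.pi fun _ => Set.finite_Icc _ _) hsub

lemma bZ_zero_of : ∀ δ : Fin n → ℤ, δ = 0 → bZ M δ δ = 0 := by
  intro δ h; subst h; simp [bZ]

lemma root_bound (hsymm : ∀ i j, M i j = M j i) (x y : Fin n → ℝ) (ε η : ℝ)
    (hε : 0 < ε) (hη : 0 < η)
    (hcore : ∀ v : Fin n → ℝ, ‖v‖ = 1 → -η ≤ bR M v v →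
      ε ≤ (bR M x v)^2 + (bR M y v)^2)
    (hrootG : ∀ δ : Fin n → ℤ, bZ M δ δ = -2 →
      0 < (bR M x (intToR δ))^2 + (bR M y (intToR δ))^2) :
    ∃ c : ℝ, 0 < c ∧ ∀ δ : Fin n → ℤ, bZ M δ δ = -2 →
      c * ‖intToR δ‖^2 ≤ (bR M x (intToR δ))^2 + (bR M y (intToR δ))^2 := by
  set R : ℝ := Real.sqrt (2/η) with hR
  have hfin := small_roots_finite M R
  set T : Finset (Fin n → ℤ) := hfin.toFinset with hT
  have hdne : ∀ δ : Fin n → ℤ, bZ M δ δ = -2 → (0:ℝ) < ‖intToR δ‖ := by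
    intro δ hδ
    rw [norm_pos_iff]
    intro h
    have : δ = 0 := by
      funext i
      have := congrFun h i
      simpa [intToR] using this
    rw [bZ_zero_of M δ this] at hδ
    norm_num at hδ
  -- lower bound on the finite part
  have hfinpart : ∃ c : ℝ, 0 < c ∧ ∀ δ ∈ T, c * ‖intToR δ‖^2 ≤
      (bR M x (intToR δ))^2 + (bR M y (intToR δ))^2 := by
    by_cases hTne : T.Nonempty
    · set f : (Fin n → ℤ) → ℝ := fun δ =>
        ((bR M x (intToR δ))^2 + (bR M y (intToR δ))^2) / ‖intToR δ‖^2 with hf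
      refine ⟨T.inf' hTne f, ?_, ?_⟩
      · rw [Finset.lt_inf'_iff]
        intro δ hδT
        have hδ : bZ M δ δ = -2 := ((hfin.mem_toFinset).1 hδT).1
        have h1 := hrootG δ hδ
        have h2 := hdne δ hδ
        rw [hf]
        positivity
      · intro δ hδT
        have hδ : bZ M δ δ = -2 := ((hfin.mem_toFinset).1 hδT).1
        have h2 := hdne δ hδ
        have hle : T.inf' hTne f ≤ f δ := Finset.inf'_le f hδT
        have := mul_le_mul_of_nonneg_right hle (le_of_lt (by positivity : (0:ℝ) < ‖intToR δ‖^2))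
        calc T.inf' hTne f * ‖intToR δ‖^2 ≤ f δ * ‖intToR δ‖^2 := this
          _ = (bR M x (intToR δ))^2 + (bR M y (intToR δ))^2 := by
              rw [hf]; field_simp
    · exact ⟨1, one_pos, fun δ hδ => absurd ⟨δ, hδ⟩ hTne⟩
  obtain ⟨c₂, hc₂, hc₂b⟩ := hfinpart
  refine ⟨min ε c₂, lt_min hε hc₂, fun δ hδ => ?_⟩
  by_cases hsmall : ‖intToR δ‖ ≤ R
  · have hmem : δ ∈ T := (hfin.mem_toFinset).2 ⟨hδ, hsmall⟩
    calc min ε c₂ * ‖intToR δ‖^2 ≤ c₂ * ‖intToR δ‖^2 := by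
          have := min_le_right ε c₂
          nlinarith [sq_nonneg (‖intToR δ‖)]
      _ ≤ _ := hc₂b δ hmem
  · -- large roots: use the core bound
    push_neg at hsmall
    have hd := hdne δ hδ
    have hR2 : 2/η < ‖intToR δ‖^2 := by
      have h0 : (0:ℝ) ≤ 2/η := by positivity
      calc 2/η = R^2 := by rw [hR, Real.sq_sqrt h0]
        _ < ‖intToR δ‖^2 := by
            apply pow_lt_pow_left₀ hsmall (Real.sqrt_nonneg _)
            norm_num
    have hqd : bR M (intToR δ) (intToR δ) = -2 := by
      rw [bZ_cast M δ, hδ]; norm_num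
    have hqineq : -η * ‖intToR δ‖^2 ≤ bR M (intToR δ) (intToR δ) := by
      rw [hqd]
      have : 2 < η * ‖intToR δ‖^2 := by
        rw [div_lt_iff₀ hη] at hR2
        linarith [hR2]
      linarith
    have := cone_bound M hsymm x y ε η hε hη hcore (intToR δ) hqineq
    calc min ε c₂ * ‖intToR δ‖^2 ≤ ε * ‖intToR δ‖^2 := by
          have := min_le_left ε c₂
          nlinarith [sq_nonneg (‖intToR δ‖)]
      _ ≤ _ := this

end ST10

theorem bound_on_positive_cone_and_roots {n : ℕ} (hn : 2 ≤ n)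
    (M : Matrix (Fin n) (Fin n) ℤ) (hsymm : ∀ i j, M i j = M j i)
    -- the real extension of the form is nondegenerate of signature (2, n-2):
    (e : Module.Basis (Fin n) ℝ (Fin n → ℝ))
    (he : ∀ i j, bR M (e i) (e j) =
      if i = j then (if (i : ℕ) < 2 then 1 else -1) else 0)
    -- an arbitrary norm on the finite-dimensional complex vector space `N ⊗ ℂ`:
    (nrm : Seminorm ℂ (Fin n → ℂ)) (hnrm : ∀ u : Fin n → ℂ, nrm u = 0 → u = 0)
    -- `Ω` spans a positive definite two-plane in `N ⊗ ℝ`: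
    (Ω : Fin n → ℂ)
    (hΩ : ∀ a b : ℝ, ¬ (a = 0 ∧ b = 0) →
      0 < bR M (a • reOf Ω + b • imOf Ω) (a • reOf Ω + b • imOf Ω))
    -- `Ω` is orthogonal to no root `δ ∈ Δ`:
    (hroot : ∀ δ : Fin n → ℤ, bZ M δ δ = -2 → bC M Ω (intToC δ) ≠ 0) :
    ∃ r : ℝ, 0 < r ∧
      (∀ (u : Fin n → ℂ) (v : Fin n → ℝ), 0 ≤ bR M v v →
        ‖bC M u (toC v)‖ ≤ r * nrm u * ‖bC M Ω (toC v)‖) ∧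
      (∀ (u : Fin n → ℂ) (δ : Fin n → ℤ), bZ M δ δ = -2 →
        ‖bC M u (intToC δ)‖ ≤
          r * nrm u * ‖bC M Ω (intToC δ)‖) := by
  classical
  set x : Fin n → ℝ := reOf Ω with hx
  set y : Fin n → ℝ := imOf Ω with hy
  have hn1 : 1 ≤ n := le_trans one_le_two hn
  -- the square of |(Ω, v)| is G v
  have absG : ∀ v : Fin n → ℝ,
      (‖(bC M Ω (toC v))‖)^2 = (bR M x v)^2 + (bR M y v)^2 := by
    intro v
    rw [Complex.sq_norm, Complex.normSq_apply, (ST10.bC_re M Ω v).1, (ST10.bC_re M Ω v).2]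
    ring
  -- the core compactness estimate
  obtain ⟨ε, hε, η, hη, hcore⟩ := ST10.core M hn hsymm e he x y hΩ
  -- positivity of G on the roots
  have hrootG : ∀ δ : Fin n → ℤ, bZ M δ δ = -2 →
      0 < (bR M x (intToR δ))^2 + (bR M y (intToR δ))^2 := by
    intro δ hδ
    have h1 := hroot δ hδ
    rw [ST10.intToC_eq] at h1
    have h2 : 0 < ‖(bC M Ω (toC (intToR δ)))‖ := by
      rcases (norm_nonneg (bC M Ω (toC (intToR δ)))).lt_or_eq with h | h
      · exact h
      · exact absurd (norm_eq_zero.1 h.symm) h1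
    rw [← absG]
    positivity
  obtain ⟨c₂, hc₂, hrootb⟩ := ST10.root_bound M hsymm x y ε η hε hη hcore hrootG
  -- lower bound for the seminorm
  obtain ⟨ε₀, hε₀, hε₀b⟩ := ST10.seminorm_lower hn1 nrm hnrm
  -- the constant for the bilinear bound
  set C₁ : ℝ := ∑ i, ∑ j, |(M i j : ℝ)| with hC₁
  have hC₁0 : 0 ≤ C₁ := Finset.sum_nonneg fun i _ => Finset.sum_nonneg fun j _ => abs_nonneg _
  set cA : ℝ := (Real.sqrt ε)⁻¹ with hcA
  set cB : ℝ := (Real.sqrt c₂)⁻¹ with hcB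
  have hcA0 : 0 < cA := by rw [hcA]; positivity
  have hcB0 : 0 < cB := by rw [hcB]; positivity
  -- the norm lower bounds in terms of |(Ω, v)|
  have hCA : ∀ v : Fin n → ℝ, 0 ≤ bR M v v →
      ‖v‖ ≤ cA * ‖(bC M Ω (toC v))‖ := by
    intro v hv
    have h1 : ε * ‖v‖^2 ≤ (‖(bC M Ω (toC v))‖)^2 := by
      rw [absG]
      refine ST10.cone_bound M hsymm x y ε η hε hη hcore v ?_
      have : -η * ‖v‖^2 ≤ 0 := by nlinarith [sq_nonneg ‖v‖]
      linarith
    have h2 := Real.sqrt_le_sqrt h1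
    rw [Real.sqrt_mul (le_of_lt hε), Real.sqrt_sq (norm_nonneg v),
      Real.sqrt_sq (norm_nonneg _)] at h2
    have hs : 0 < Real.sqrt ε := Real.sqrt_pos.2 hε
    calc ‖v‖ = cA * (Real.sqrt ε * ‖v‖) := by
          rw [hcA, ← mul_assoc, inv_mul_cancel₀ hs.ne', one_mul]
      _ ≤ cA * ‖(bC M Ω (toC v))‖ := by
          exact mul_le_mul_of_nonneg_left h2 (le_of_lt hcA0)
  have hCB : ∀ δ : Fin n → ℤ, bZ M δ δ = -2 →
      ‖intToR δ‖ ≤ cB * ‖(bC M Ω (toC (intToR δ)))‖ := by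
    intro δ hδ
    have h1 : c₂ * ‖intToR δ‖^2 ≤ (‖(bC M Ω (toC (intToR δ)))‖)^2 := by
      rw [absG]
      exact hrootb δ hδ
    have h2 := Real.sqrt_le_sqrt h1
    rw [Real.sqrt_mul (le_of_lt hc₂), Real.sqrt_sq (norm_nonneg _),
      Real.sqrt_sq (norm_nonneg _)] at h2
    have hs : 0 < Real.sqrt c₂ := Real.sqrt_pos.2 hc₂
    calc ‖intToR δ‖ = cB * (Real.sqrt c₂ * ‖intToR δ‖) := by
          rw [hcB, ← mul_assoc, inv_mul_cancel₀ hs.ne', one_mul]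
      _ ≤ cB * ‖(bC M Ω (toC (intToR δ)))‖ := by
          exact mul_le_mul_of_nonneg_left h2 (le_of_lt hcB0)
  -- assemble the final constant
  refine ⟨(C₁ + 1) * ε₀⁻¹ * max cA cB, by positivity, ?_, ?_⟩
  · intro u v hv
    have h₁ : ‖(bC M u (toC v))‖ ≤ C₁ * ‖u‖ * ‖v‖ := by
      have := ST10.bC_bound M u (toC v)
      rwa [ST10.norm_toC] at this
    have h₂ : ‖u‖ ≤ ε₀⁻¹ * nrm u := by
      have := hε₀b u
      calc ‖u‖ = ε₀⁻¹ * (ε₀ * ‖u‖) := by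
            rw [← mul_assoc, inv_mul_cancel₀ hε₀.ne', one_mul]
        _ ≤ ε₀⁻¹ * nrm u := mul_le_mul_of_nonneg_left this (by positivity)
    have h₃ := hCA v hv
    calc ‖(bC M u (toC v))‖ ≤ C₁ * ‖u‖ * ‖v‖ := h₁
      _ ≤ C₁ * (ε₀⁻¹ * nrm u) * (cA * ‖(bC M Ω (toC v))‖) := by
          have hA0 : 0 ≤ ‖(bC M Ω (toC v))‖ := norm_nonneg _
          have e1 : C₁ * ‖u‖ ≤ C₁ * (ε₀⁻¹ * nrm u) :=
            mul_le_mul_of_nonneg_left h₂ hC₁0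
          exact mul_le_mul e1 h₃ (norm_nonneg v)
            (by positivity)
      _ = (C₁ * ε₀⁻¹ * cA) * nrm u * ‖(bC M Ω (toC v))‖ := by ring
      _ ≤ (C₁ + 1) * ε₀⁻¹ * max cA cB * nrm u * ‖(bC M Ω (toC v))‖ := by
          have e2 : C₁ * ε₀⁻¹ * cA ≤ (C₁ + 1) * ε₀⁻¹ * max cA cB := by
            have e3 : C₁ * ε₀⁻¹ ≤ (C₁ + 1) * ε₀⁻¹ :=
              mul_le_mul_of_nonneg_right (by linarith) (by positivity)
            have e4 : cA ≤ max cA cB := le_max_left _ _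
            exact mul_le_mul e3 e4 (le_of_lt hcA0) (by positivity)
          exact mul_le_mul_of_nonneg_right
            (mul_le_mul_of_nonneg_right e2 (apply_nonneg nrm u)) (norm_nonneg _)
  · intro u δ hδ
    rw [ST10.intToC_eq]
    have h₁ : ‖(bC M u (toC (intToR δ)))‖ ≤ C₁ * ‖u‖ * ‖intToR δ‖ := by
      have := ST10.bC_bound M u (toC (intToR δ))
      rwa [ST10.norm_toC] at this
    have h₂ : ‖u‖ ≤ ε₀⁻¹ * nrm u := by
      have := hε₀b u
      calc ‖u‖ = ε₀⁻¹ * (ε₀ * ‖u‖) := by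
            rw [← mul_assoc, inv_mul_cancel₀ hε₀.ne', one_mul]
        _ ≤ ε₀⁻¹ * nrm u := mul_le_mul_of_nonneg_left this (by positivity)
    have h₃ := hCB δ hδ
    calc ‖(bC M u (toC (intToR δ)))‖ ≤ C₁ * ‖u‖ * ‖intToR δ‖ := h₁
      _ ≤ C₁ * (ε₀⁻¹ * nrm u) * (cB * ‖(bC M Ω (toC (intToR δ)))‖) := by
          have e1 : C₁ * ‖u‖ ≤ C₁ * (ε₀⁻¹ * nrm u) :=
            mul_le_mul_of_nonneg_left h₂ hC₁0
          exact mul_le_mul e1 h₃ (norm_nonneg _) (by positivity)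
      _ = (C₁ * ε₀⁻¹ * cB) * nrm u * ‖(bC M Ω (toC (intToR δ)))‖ := by ring
      _ ≤ (C₁ + 1) * ε₀⁻¹ * max cA cB * nrm u
            * ‖(bC M Ω (toC (intToR δ)))‖ := by
          have e2 : C₁ * ε₀⁻¹ * cB ≤ (C₁ + 1) * ε₀⁻¹ * max cA cB := by
            have e3 : C₁ * ε₀⁻¹ ≤ (C₁ + 1) * ε₀⁻¹ :=
              mul_le_mul_of_nonneg_right (by linarith) (by positivity)
            have e4 : cB ≤ max cA cB := le_max_right _ _
            exact mul_le_mul e3 e4 (le_of_lt hcB0) (by positivity)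
          exact mul_le_mul_of_nonneg_right
            (mul_le_mul_of_nonneg_right e2 (apply_nonneg nrm u)) (norm_nonneg _)

end
end

section
/- Let N be a free ℤ-module of finite rank n ≥ 2 with a symmetric bilinear form (−,−) whose ℝ-linear extension to N ⊗ ℝ is nondegenerate of signature (2, n−2), extended ℂ-bilinearly to N ⊗ ℂ, and let Δ = { δ ∈ N : (δ,δ) = −2 }. Suppose Ω ∈ N ⊗ ℂ is a vector whose real and imaginary parts span a positive definite two-plane in N ⊗ ℝ and which satisfies (Ω,δ) ≠ 0 for all δ ∈ Δ. Then for every constant m > 0 the set { v ∈ N : (v,v) ≥ −2 and |(Ω,v)| ≤ m } is finite. -/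
/-!
STATEMENT 11 (Lemma 6.3 of the paper): if `Ω` spans a positive definite two-plane and
is orthogonal to no root, then for every `m > 0` there are only finitely many lattice
vectors `v` with `(v,v) ≥ -2` and `|(Ω,v)| ≤ m`.

The free ℤ-module `N` of rank `n` is realised as `Fin n → ℤ`, with `N ⊗ ℝ = Fin n → ℝ`
and `N ⊗ ℂ = Fin n → ℂ`; the symmetric bilinear form is given by an integer matrix `M`,
extended ℝ- and ℂ-bilinearly.
-/

open scoped BigOperators

noncomputable section

variable {n : ℕ} {M : Matrix (Fin n) (Fin n) ℤ}

lemma bR_add_left (u v w : Fin n → ℝ) : bR M (u + v) w = bR M u w + bR M v w := by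
  simp [bR, mul_add, add_mul, Finset.sum_add_distrib]

lemma bR_add_right (u v w : Fin n → ℝ) : bR M u (v + w) = bR M u v + bR M u w := by
  simp [bR, mul_add, Finset.sum_add_distrib]

lemma bR_smul_left (c : ℝ) (u v : Fin n → ℝ) : bR M (c • u) v = c * bR M u v := by
  simp only [bR, Pi.smul_apply, smul_eq_mul, Finset.mul_sum]
  refine Finset.sum_congr rfl fun i _ => Finset.sum_congr rfl fun j _ => by ring

lemma bR_smul_right (c : ℝ) (u v : Fin n → ℝ) : bR M u (c • v) = c * bR M u v := by
  simp only [bR, Pi.smul_apply, smul_eq_mul, Finset.mul_sum]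
  refine Finset.sum_congr rfl fun i _ => Finset.sum_congr rfl fun j _ => by ring

lemma bR_sub_left (u v w : Fin n → ℝ) : bR M (u - v) w = bR M u w - bR M v w := by
  simp [bR, sub_mul, mul_sub, Finset.sum_sub_distrib]

lemma bR_sub_right (u v w : Fin n → ℝ) : bR M u (v - w) = bR M u v - bR M u w := by
  simp [bR, mul_sub, Finset.sum_sub_distrib]

lemma bR_zero_right (u : Fin n → ℝ) : bR M u 0 = 0 := by simp [bR]
lemma bR_zero_left (u : Fin n → ℝ) : bR M 0 u = 0 := by simp [bR]

lemma bR_comm (hsymm : ∀ i j, M i j = M j i) (u v : Fin n → ℝ) : bR M u v = bR M v u := by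
  rw [bR, bR, Finset.sum_comm]
  refine Finset.sum_congr rfl fun i _ => Finset.sum_congr rfl fun j _ => by rw [hsymm j i]; ring

lemma bR_sum_left {ι : Type*} (t : Finset ι) (f : ι → (Fin n → ℝ)) (v : Fin n → ℝ) :
    bR M (∑ i ∈ t, f i) v = ∑ i ∈ t, bR M (f i) v := by
  classical
  induction t using Finset.induction with
  | empty => simp [bR_zero_left]
  | insert _ _ h ih => rw [Finset.sum_insert h, bR_add_left, ih, Finset.sum_insert h]

lemma bR_sum_right {ι : Type*} (t : Finset ι) (f : ι → (Fin n → ℝ)) (v : Fin n → ℝ) :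
    bR M v (∑ i ∈ t, f i) = ∑ i ∈ t, bR M v (f i) := by
  classical
  induction t using Finset.induction with
  | empty => simp [bR_zero_right]
  | insert _ _ h ih => rw [Finset.sum_insert h, bR_add_right, ih, Finset.sum_insert h]

lemma bR_diag (e : Module.Basis (Fin n) ℝ (Fin n → ℝ))
    (he : ∀ i j, bR M (e i) (e j) =
      if i = j then (if (i : ℕ) < 2 then 1 else -1) else 0)
    (u : Fin n → ℝ) :
    bR M u u = ∑ i : Fin n, (if (i : ℕ) < 2 then (1:ℝ) else -1) * (e.repr u i)^2 := by
  classical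
  conv_lhs => rw [← e.sum_repr u]
  rw [bR_sum_left]
  refine Finset.sum_congr rfl fun i _ => ?_
  rw [bR_sum_right]
  rw [Finset.sum_eq_single i]
  · rw [bR_smul_left, bR_smul_right, he i i]
    simp; ring_nf
  · intro j _ hj
    rw [bR_smul_left, bR_smul_right, he i j, if_neg (Ne.symm hj)]
    ring
  · intro h; simp at h

lemma negdef (e : Module.Basis (Fin n) ℝ (Fin n → ℝ))
    (he : ∀ i j, bR M (e i) (e j) =
      if i = j then (if (i : ℕ) < 2 then 1 else -1) else 0)
    (hn : 2 ≤ n) (r s : Fin n → ℝ)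
    (hP : ∀ a b : ℝ, ¬ (a = 0 ∧ b = 0) → 0 < bR M (a • r + b • s) (a • r + b • s))
    (hsymm : ∀ i j, M i j = M j i)
    (v : Fin n → ℝ) (hr : bR M r v = 0) (hs : bR M s v = 0) (hv : v ≠ 0) :
    bR M v v < 0 := by
  classical
  by_contra hcon
  push_neg at hcon
  set i0 : Fin n := ⟨0, by omega⟩ with hi0
  set i1 : Fin n := ⟨1, by omega⟩ with hi1
  -- the three projections to the first two coordinates are linearly dependent
  set p : (Fin n → ℝ) → (Fin 2 → ℝ) := fun u => ![e.repr u i0, e.repr u i1] with hp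
  set w : Fin 3 → (Fin 2 → ℝ) := ![p r, p s, p v] with hw
  have hdep : ¬ LinearIndependent ℝ w := by
    intro h
    have := h.fintype_card_le_finrank
    rw [Module.finrank_pi] at this
    simp [Fintype.card_fin] at this
  rw [Fintype.not_linearIndependent_iff] at hdep
  obtain ⟨g, hg, ⟨ig, hig⟩⟩ := hdep
  set x : Fin n → ℝ := g 0 • r + g 1 • s + g 2 • v with hx
  have hrepr : ∀ k : Fin n, e.repr x k =
      g 0 * e.repr r k + g 1 * e.repr s k + g 2 * e.repr v k := by
    intro k
    simp [hx, map_add, map_smul]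
  have hg' : ∀ t : Fin 2, g 0 * w 0 t + g 1 * w 1 t + g 2 * w 2 t = 0 := by
    intro t
    have := congrFun hg t
    simpa [Fin.sum_univ_three] using this
  have hx0 : e.repr x i0 = 0 := by
    have := hg' 0
    simp [hw, hp] at this
    rw [hrepr]; linarith
  have hx1 : e.repr x i1 = 0 := by
    have := hg' 1
    simp [hw, hp] at this
    rw [hrepr]; linarith
  -- B x x is nonpositive
  have hxx_le : bR M x x ≤ 0 := by
    rw [bR_diag e he]
    apply Finset.sum_nonpos
    intro i _
    by_cases h2 : (i : ℕ) < 2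
    · have : i = i0 ∨ i = i1 := by
        have h3 : (i : ℕ) = 0 ∨ (i : ℕ) = 1 := by omega
        rcases h3 with h | h
        · left; exact Fin.ext h
        · right; exact Fin.ext h
      rcases this with h | h <;> simp [h, hx0, hx1]
    · rw [if_neg h2]
      nlinarith [sq_nonneg (e.repr x i)]
  have hvr : bR M v r = 0 := by rw [bR_comm hsymm]; exact hr
  have hvs : bR M v s = 0 := by rw [bR_comm hsymm]; exact hs
  have hxx_eq : bR M x x =
      bR M (g 0 • r + g 1 • s) (g 0 • r + g 1 • s) + (g 2)^2 * bR M v v := by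
    simp only [hx, bR_add_left, bR_add_right, bR_smul_left, bR_smul_right, hr, hs, hvr, hvs]
    ring
  by_cases hg01 : g 0 = 0 ∧ g 1 = 0
  · obtain ⟨h0, h1⟩ := hg01
    have hg2 : g 2 ≠ 0 := by fin_cases ig <;> simp_all
    have hxx0 : bR M x x = (g 2)^2 * bR M v v := by
      rw [hxx_eq, h0, h1]
      simp [bR_smul_left, bR_smul_right, bR_zero_left]
    have hxx_ge : 0 ≤ bR M x x := by
      rw [hxx0]; exact mul_nonneg (sq_nonneg _) hcon
    have hxx : bR M x x = 0 := le_antisymm hxx_le hxx_ge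
    have hsum0 : ∑ i : Fin n, (if (i : ℕ) < 2 then (1:ℝ) else -1) * (e.repr x i)^2 = 0 := by
      rw [← bR_diag e he]; exact hxx
    have hall := (Finset.sum_eq_zero_iff_of_nonpos ?_).mp hsum0
    · have hreprz : ∀ k : Fin n, e.repr x k = 0 := by
        intro k
        by_cases h2 : (k : ℕ) < 2
        · have : k = i0 ∨ k = i1 := by
            have h3 : (k : ℕ) = 0 ∨ (k : ℕ) = 1 := by omega
            rcases h3 with h | h
            · left; exact Fin.ext h
            · right; exact Fin.ext h
          rcases this with h | h <;> rw [h] <;> assumption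
        · have := hall k (Finset.mem_univ k)
          rw [if_neg h2] at this
          nlinarith [sq_nonneg (e.repr x k)]
      have hxzero : x = 0 := by
        have : e.repr x = 0 := Finsupp.ext hreprz
        simpa using (LinearEquiv.map_eq_zero_iff e.repr).mp this
      have : v = 0 := by
        have hx2 : x = g 2 • v := by rw [hx, h0, h1]; simp
        rw [hx2] at hxzero
        rcases smul_eq_zero.mp hxzero with h | h
        · exact absurd h hg2
        · exact h
      exact hv this
    · intro i _
      by_cases h2 : (i : ℕ) < 2
      · have : i = i0 ∨ i = i1 := by
          have h3 : (i : ℕ) = 0 ∨ (i : ℕ) = 1 := by omega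
          rcases h3 with h | h
          · left; exact Fin.ext h
          · right; exact Fin.ext h
        rcases this with h | h <;> simp [h, hx0, hx1]
      · rw [if_neg h2]; nlinarith [sq_nonneg (e.repr x i)]
  · have hy := hP (g 0) (g 1) hg01
    have hprod := mul_nonneg (sq_nonneg (g 2)) hcon
    have : 0 < bR M x x := by rw [hxx_eq]; linarith
    linarith

lemma Qpos (e : Module.Basis (Fin n) ℝ (Fin n → ℝ))
    (he : ∀ i j, bR M (e i) (e j) =
      if i = j then (if (i : ℕ) < 2 then 1 else -1) else 0)
    (hn : 2 ≤ n) (r s : Fin n → ℝ)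
    (hP : ∀ a b : ℝ, ¬ (a = 0 ∧ b = 0) → 0 < bR M (a • r + b • s) (a • r + b • s))
    (hsymm : ∀ i j, M i j = M j i)
    (hd : 0 < bR M r r * bR M s s - (bR M r s)^2)
    (v : Fin n → ℝ) (hv : v ≠ 0) :
    0 < 2 * (bR M s s * (bR M r v)^2 - 2*(bR M r s)*(bR M r v)*(bR M s v)
        + bR M r r*(bR M s v)^2) / (bR M r r * bR M s s - (bR M r s)^2) - bR M v v := by
  have hdne : bR M r r * bR M s s - (bR M r s)^2 ≠ 0 := ne_of_gt hd
  have hsr : bR M s r = bR M r s := bR_comm hsymm s r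
  have hvr : bR M v r = bR M r v := bR_comm hsymm v r
  have hvs : bR M v s = bR M s v := bR_comm hsymm v s
  set a : ℝ := (bR M s s * bR M r v - bR M r s * bR M s v)
      / (bR M r r * bR M s s - (bR M r s)^2) with ha
  set b : ℝ := (bR M r r * bR M s v - bR M r s * bR M r v)
      / (bR M r r * bR M s s - (bR M r s)^2) with hb
  set u : Fin n → ℝ := a • r + b • s with hu
  set w : Fin n → ℝ := v - u with hw
  have huu : bR M u u = a*a*(bR M r r) + 2*a*b*(bR M r s) + b*b*(bR M s s) := by
    rw [hu]
    simp only [bR_add_left, bR_add_right, bR_smul_left, bR_smul_right, hsr]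
    ring
  have hww : bR M w w = bR M v v - 2*(a*(bR M r v) + b*(bR M s v))
      + (a*a*(bR M r r) + 2*a*b*(bR M r s) + b*b*(bR M s s)) := by
    rw [hw, hu]
    simp only [bR_sub_left, bR_sub_right, bR_add_left, bR_add_right,
      bR_smul_left, bR_smul_right, hsr, hvr, hvs]
    ring
  have hrw : bR M r w = 0 := by
    rw [hw, hu]
    simp only [bR_sub_right, bR_add_right, bR_smul_right]
    rw [ha, hb]
    have hdne' : bR M s s * bR M r r - bR M r s ^ 2 ≠ 0 := by rw [mul_comm]; exact hdne
    field_simp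
    ring
  have hsw : bR M s w = 0 := by
    rw [hw, hu]
    simp only [bR_sub_right, bR_add_right, bR_smul_right, hsr]
    rw [ha, hb]
    have hdne' : bR M s s * bR M r r - bR M r s ^ 2 ≠ 0 := by rw [mul_comm]; exact hdne
    field_simp
    ring
  have hgoal_eq : 2 * (bR M s s * (bR M r v)^2 - 2*(bR M r s)*(bR M r v)*(bR M s v)
        + bR M r r*(bR M s v)^2) / (bR M r r * bR M s s - (bR M r s)^2) - bR M v v
      = bR M u u - bR M w w := by
    rw [huu, hww, ha, hb]
    field_simp
    ring
  rw [hgoal_eq]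
  have huu_nonneg : 0 ≤ bR M u u := by
    by_cases hab : a = 0 ∧ b = 0
    · rw [hu, hab.1, hab.2]; simp [bR_zero_left]
    · exact le_of_lt (by rw [hu]; exact hP a b hab)
  by_cases hww0 : w = 0
  · have hwz : bR M w w = 0 := by rw [hww0]; exact bR_zero_left 0
    rw [hwz, sub_zero]
    have huv : v = u := by
      have : v - u = 0 := by rw [← hw]; exact hww0
      exact sub_eq_zero.mp this
    have hab : ¬ (a = 0 ∧ b = 0) := by
      rintro ⟨h0, h1⟩
      apply hv
      rw [huv, hu, h0, h1]; simp
    rw [hu]; exact hP a b hab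
  · have hwneg : bR M w w < 0 := negdef e he hn r s hP hsymm w hrw hsw hww0
    linarith

lemma bC_re (Ω : Fin n → ℂ) (v : Fin n → ℤ) :
    (bC M Ω (intToC v)).re = bR M (reOf Ω) (fun i => (v i : ℝ)) := by
  simp [bC, bR, reOf, intToC, Complex.re_sum, Complex.mul_re, Complex.mul_im]

lemma bC_im (Ω : Fin n → ℂ) (v : Fin n → ℤ) :
    (bC M Ω (intToC v)).im = bR M (imOf Ω) (fun i => (v i : ℝ)) := by
  simp [bC, bR, imOf, intToC, Complex.im_sum, Complex.mul_re, Complex.mul_im]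

lemma bZ_cast (v : Fin n → ℤ) :
    ((bZ M v v : ℤ) : ℝ) = bR M (fun i => (v i : ℝ)) (fun i => (v i : ℝ)) := by
  simp [bZ, bR]

@[fun_prop]
lemma bR_cont_right (u : Fin n → ℝ) : Continuous fun v : Fin n → ℝ => bR M u v := by
  unfold bR
  exact continuous_finset_sum _ fun i _ => continuous_finset_sum _ fun j _ =>
    Continuous.mul continuous_const (continuous_apply j)

@[fun_prop]
lemma bR_cont_diag : Continuous fun v : Fin n → ℝ => bR M v v := by
  unfold bR
  exact continuous_finset_sum _ fun i _ => continuous_finset_sum _ fun j _ =>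
    Continuous.mul (Continuous.mul continuous_const (continuous_apply i)) (continuous_apply j)


set_option maxHeartbeats 1000000 in
theorem finitely_many_bounded_vectors {n : ℕ} (hn : 2 ≤ n)
    (M : Matrix (Fin n) (Fin n) ℤ) (hsymm : ∀ i j, M i j = M j i)
    -- the real extension of the form is nondegenerate of signature (2, n-2):
    (e : Module.Basis (Fin n) ℝ (Fin n → ℝ))
    (he : ∀ i j, bR M (e i) (e j) =
      if i = j then (if (i : ℕ) < 2 then 1 else -1) else 0)
    -- `Ω` spans a positive definite two-plane in `N ⊗ ℝ`:
    (Ω : Fin n → ℂ)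
    (hΩ : ∀ a b : ℝ, ¬ (a = 0 ∧ b = 0) →
      0 < bR M (a • reOf Ω + b • imOf Ω) (a • reOf Ω + b • imOf Ω))
    -- `Ω` is orthogonal to no root `δ ∈ Δ`:
    (hroot : ∀ δ : Fin n → ℤ, bZ M δ δ = -2 → bC M Ω (intToC δ) ≠ 0)
    (m : ℝ) (hm : 0 < m) :
    {v : Fin n → ℤ | -2 ≤ bZ M v v ∧ ‖bC M Ω (intToC v)‖ ≤ m}.Finite := by

  classical
  set r := reOf Ω with hrd
  set s := imOf Ω with hsd
  have hg11 : 0 < bR M r r := by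
    have h := hΩ 1 0 (by norm_num)
    simpa using h
  have hsr : bR M s r = bR M r s := bR_comm hsymm s r
  have hd : 0 < bR M r r * bR M s s - (bR M r s)^2 := by
    have h2 := hΩ (-(bR M r s)) (bR M r r)
      (by rintro ⟨h1', h2'⟩; exact absurd h2' (ne_of_gt hg11))
    have hexp : bR M ((-(bR M r s)) • r + (bR M r r) • s) ((-(bR M r s)) • r + (bR M r r) • s)
        = bR M r r * (bR M r r * bR M s s - (bR M r s)^2) := by
      simp only [bR_add_left, bR_add_right, bR_smul_left, bR_smul_right, hsr]; ring
    rw [hexp] at h2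
    nlinarith
  have hdne : bR M r r * bR M s s - (bR M r s)^2 ≠ 0 := ne_of_gt hd
  set Q : (Fin n → ℝ) → ℝ := fun v =>
    2 * (bR M s s * (bR M r v)^2 - 2*(bR M r s)*(bR M r v)*(bR M s v)
        + bR M r r*(bR M s v)^2) / (bR M r r * bR M s s - (bR M r s)^2) - bR M v v with hQ
  have hQpos : ∀ v : Fin n → ℝ, v ≠ 0 → 0 < Q v := fun v hv =>
    Qpos e he hn r s hΩ hsymm hd v hv
  have hQcont : Continuous Q := by
    rw [hQ]; fun_prop
  have hQhom : ∀ (t : ℝ) (v : Fin n → ℝ), Q (t • v) = t^2 * Q v := by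
    intro t v
    simp only [hQ, bR_smul_left, bR_smul_right]
    field_simp
  haveI : Nonempty (Fin n) := ⟨⟨0, by omega⟩⟩
  haveI : Nontrivial (Fin n → ℝ) := Function.nontrivial
  obtain ⟨u0, hu0S, hu0min⟩ := (isCompact_sphere (0 : Fin n → ℝ) 1).exists_isMinOn
    (NormedSpace.sphere_nonempty.mpr zero_le_one) hQcont.continuousOn
  have hu0norm : ‖u0‖ = 1 := by simpa using mem_sphere_zero_iff_norm.mp hu0S
  have hu0ne : u0 ≠ 0 := fun h => by simp [h] at hu0norm
  have hc : 0 < Q u0 := hQpos u0 hu0ne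
  have hQ0 : Q 0 = 0 := by
    simp only [hQ]
    simp [bR_zero_right, bR_zero_left]
  have hlow : ∀ v : Fin n → ℝ, Q u0 * ‖v‖^2 ≤ Q v := by
    intro v
    by_cases hv : v = 0
    · rw [hv, hQ0]; simp
    · have hvn : ‖v‖ ≠ 0 := norm_ne_zero_iff.mpr hv
      have hsph : ‖v‖⁻¹ • v ∈ Metric.sphere (0 : Fin n → ℝ) 1 := by
        rw [mem_sphere_zero_iff_norm, norm_smul, norm_inv, norm_norm, inv_mul_cancel₀ hvn]
      have hmin : Q u0 ≤ Q (‖v‖⁻¹ • v) := hu0min hsph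
      have hv2 : Q v = ‖v‖^2 * Q (‖v‖⁻¹ • v) := by
        conv_lhs => rw [show v = ‖v‖ • (‖v‖⁻¹ • v) by
          rw [smul_smul, mul_inv_cancel₀ hvn, one_smul]]
        rw [hQhom]
      rw [hv2]
      nlinarith [sq_nonneg ‖v‖]
  set Kq := 2 * ((|bR M s s| + 2*|bR M r s| + |bR M r r|) * m^2)
      / (bR M r r * bR M s s - (bR M r s)^2) + 2 with hKq
  set R := Real.sqrt (Kq / Q u0) with hR
  apply Set.Finite.subset (Set.finite_Icc (fun _ : Fin n => -⌈R⌉) (fun _ : Fin n => ⌈R⌉))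
  rintro v ⟨hv1, hv2⟩
  set v' : Fin n → ℝ := fun i => (v i : ℝ) with hv'
  have hα : |bR M r v'| ≤ m := by
    have hre := bC_re (M := M) Ω v
    rw [← hrd, ← hv'] at hre
    calc |bR M r v'| = |(bC M Ω (intToC v)).re| := by rw [hre]
      _ ≤ ‖bC M Ω (intToC v)‖ := Complex.abs_re_le_norm _
      _ ≤ m := hv2
  have hβ : |bR M s v'| ≤ m := by
    have him := bC_im (M := M) Ω v
    rw [← hsd, ← hv'] at him
    calc |bR M s v'| = |(bC M Ω (intToC v)).im| := by rw [him]
      _ ≤ ‖bC M Ω (intToC v)‖ := Complex.abs_im_le_norm _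
      _ ≤ m := hv2
  have hbvv : -2 ≤ bR M v' v' := by
    have hz := bZ_cast (M := M) v
    rw [← hv'] at hz
    rw [← hz]
    exact_mod_cast hv1
  have habs1 := abs_le.mp hα
  have habs2 := abs_le.mp hβ
  have hsq1 : (bR M r v')^2 ≤ m^2 := by nlinarith [habs1.1, habs1.2]
  have hsq2 : (bR M s v')^2 ≤ m^2 := by nlinarith [habs2.1, habs2.2]
  have hcross : |bR M r v' * bR M s v'| ≤ m^2 := by
    rw [abs_mul]
    calc |bR M r v'| * |bR M s v'| ≤ m * m :=
          mul_le_mul hα hβ (abs_nonneg _) (le_of_lt hm)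
      _ = m^2 := by ring
  have hnum : bR M s s * (bR M r v')^2 - 2*(bR M r s)*(bR M r v')*(bR M s v')
      + bR M r r*(bR M s v')^2 ≤ (|bR M s s| + 2*|bR M r s| + |bR M r r|) * m^2 := by
    have h1 : bR M s s * (bR M r v')^2 ≤ |bR M s s| * m^2 :=
      le_trans (mul_le_mul_of_nonneg_right (le_abs_self _) (sq_nonneg _))
        (mul_le_mul_of_nonneg_left hsq1 (abs_nonneg _))
    have h3 : bR M r r * (bR M s v')^2 ≤ |bR M r r| * m^2 :=
      le_trans (mul_le_mul_of_nonneg_right (le_abs_self _) (sq_nonneg _))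
        (mul_le_mul_of_nonneg_left hsq2 (abs_nonneg _))
    have h2 : -(2*(bR M r s)*(bR M r v')*(bR M s v')) ≤ 2*|bR M r s| * m^2 := by
      have e1 : -(2*(bR M r s)*(bR M r v')*(bR M s v'))
          ≤ |2*(bR M r s)*(bR M r v')*(bR M s v')| := neg_le_abs _
      have e2 : |2*(bR M r s)*(bR M r v')*(bR M s v')|
          = 2*(|bR M r s| * |bR M r v' * bR M s v'|) := by
        rw [show 2*(bR M r s)*(bR M r v')*(bR M s v')
          = 2*((bR M r s)*((bR M r v')*(bR M s v'))) by ring]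
        rw [abs_mul, abs_mul, abs_two]
      have e3 : 2*(|bR M r s| * |bR M r v' * bR M s v'|) ≤ 2*|bR M r s| * m^2 := by
        have := mul_le_mul_of_nonneg_left hcross (abs_nonneg (bR M r s))
        linarith
      linarith
    linarith
  have hQv : Q v' ≤ Kq := by
    simp only [hQ, hKq]
    have h2n : 2 * (bR M s s * (bR M r v')^2 - 2*(bR M r s)*(bR M r v')*(bR M s v')
        + bR M r r*(bR M s v')^2)
        ≤ 2 * ((|bR M s s| + 2*|bR M r s| + |bR M r r|) * m^2) := by linarith
    have hdiv' : 2 * (bR M s s * (bR M r v')^2 - 2*(bR M r s)*(bR M r v')*(bR M s v')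
        + bR M r r*(bR M s v')^2) / (bR M r r * bR M s s - (bR M r s)^2)
        ≤ 2 * ((|bR M s s| + 2*|bR M r s| + |bR M r r|) * m^2)
          / (bR M r r * bR M s s - (bR M r s)^2) := by
      gcongr
    linarith
  have hn2 : Q u0 * ‖v'‖^2 ≤ Kq := le_trans (hlow v') hQv
  have hnorm2 : ‖v'‖^2 ≤ Kq / Q u0 := (le_div_iff₀ hc).mpr (by linarith)
  have hnormle : ‖v'‖ ≤ R := by
    rw [hR, ← Real.sqrt_sq (norm_nonneg v')]
    exact Real.sqrt_le_sqrt hnorm2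
  have hcoord : ∀ i, |(v i : ℝ)| ≤ R := by
    intro i
    have h1 : ‖v' i‖ ≤ ‖v'‖ := norm_le_pi_norm v' i
    rw [Real.norm_eq_abs] at h1
    calc |(v i : ℝ)| = |v' i| := by rw [hv']
      _ ≤ ‖v'‖ := h1
      _ ≤ R := hnormle
  refine Set.mem_Icc.mpr ⟨fun i => ?_, fun i => ?_⟩
  · have h1 := (abs_le.mp (hcoord i)).1
    have h2 : R ≤ (⌈R⌉ : ℝ) := Int.le_ceil R
    have : -((⌈R⌉ : ℤ) : ℝ) ≤ ((v i : ℤ) : ℝ) := by push_cast; linarith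
    exact_mod_cast this
  · have h1 := (abs_le.mp (hcoord i)).2
    have h2 : R ≤ (⌈R⌉ : ℝ) := Int.le_ceil R
    have : ((v i : ℤ) : ℝ) ≤ ((⌈R⌉ : ℤ) : ℝ) := by push_cast; linarith
    exact_mod_cast this

end
end

section
/- Let D be a ℂ-linear triangulated category such that for all objects E,F the space ⊕_i Hom(E,F[i]) is finite-dimensional over ℂ, and which satisfies Serre duality in dimension 2: dim_ℂ Hom(E,F[i]) = dim_ℂ Hom(F,E[2−i]) for all E,F and all i ∈ ℤ. Write χ(E,F) = Σ_i (−1)^i dim_ℂ Hom(E,F[i]). Let σ = (Z,P) be a stability condition on D and let E be a nonzero semistable object of σ with Hom(E,E) ≅ ℂ. Then dim_ℂ Hom(E,E[1]) = 2 − χ(E,E) ≥ 0; in particular χ(E,E) ≤ 2, with equality if and only if E is spherical. -/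
/-!
STATEMENT 12 (Lemma 5.1 / Mukai): for a stable-like object `E` (a nonzero semistable
object with `Hom(E,E) ≅ ℂ`) in a ℂ-linear, Hom-finite triangulated category satisfying
Serre duality in dimension 2, `dim Hom(E,E[1]) = 2 - χ(E,E) ≥ 0`, so `χ(E,E) ≤ 2` with
equality iff `E` is spherical.
-/

open CategoryTheory CategoryTheory.Limits CategoryTheory.Pretriangulated

universe v u

variable (C : Type u) [Category.{v} C] [HasZeroObject C] [HasShift C ℤ]
  [Preadditive C] [∀ n : ℤ, (CategoryTheory.shiftFunctor C n).Additive] [Pretriangulated C]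
  [CategoryTheory.Linear ℂ C]

/-- A Harder–Narasimhan decomposition of an object `E` with respect to a collection of
full subcategories `P φ` (`φ : ℝ`). -/
structure HNFiltration (P : ℝ → Set C) (E : C) where
  n : ℕ
  phase : Fin n → ℝ
  phase_strictAnti : StrictAnti phase
  obj : Fin (n + 1) → C
  obj_zero : IsZero (obj 0)
  obj_last : obj (Fin.last n) = E
  fac : Fin n → C
  fac_mem : ∀ j, fac j ∈ P (phase j)
  fac_nonzero : ∀ j, ¬ IsZero (fac j)
  triangle : ∀ j : Fin n, ∃ (f : obj j.castSucc ⟶ obj j.succ) (g : obj j.succ ⟶ fac j)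
      (h : fac j ⟶ (obj j.castSucc)⟦(1 : ℤ)⟧), Triangle.mk f g h ∈ distTriang C

/-- A stability condition `σ = (Z, P)` on a triangulated category `C`. -/
structure StabilityCondition where
  Z : C → ℂ
  P : ℝ → Set C
  additive : ∀ T : Triangle C, (T ∈ distTriang C) → Z T.obj₂ = Z T.obj₁ + Z T.obj₃
  P_iso : ∀ (φ : ℝ) (A B : C), (A ≅ B) → A ∈ P φ → B ∈ P φ
  P_zero : ∀ (φ : ℝ) (A : C), IsZero A → A ∈ P φ
  central : ∀ (φ : ℝ) (E : C), E ∈ P φ → ¬ IsZero E →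
      ∃ m : ℝ, 0 < m ∧ Z E = m * Complex.exp (Real.pi * φ * Complex.I)
  shift : ∀ (φ : ℝ) (E : C), E ∈ P (φ + 1) ↔ E⟦(-1 : ℤ)⟧ ∈ P φ
  hom_zero : ∀ (φ₁ φ₂ : ℝ), φ₂ < φ₁ → ∀ (A B : C), A ∈ P φ₁ → B ∈ P φ₂ →
      ∀ f : A ⟶ B, f = 0
  HN : ∀ E : C, ¬ IsZero E → Nonempty (HNFiltration C P E)

/-- `dim_ℂ Hom(E, F[i])`. -/
noncomputable def homDim (E F : C) (i : ℤ) : ℕ := Module.finrank ℂ (E ⟶ F⟦i⟧)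

/-- The Euler form `χ(E,F) = Σ_i (-1)^i dim_ℂ Hom(E, F[i])` (note `(-1)^i = (-1)^|i|`). -/
noncomputable def chi (E F : C) : ℤ :=
  ∑ᶠ i : ℤ, (-1 : ℤ) ^ i.natAbs * (homDim C E F i : ℤ)

/-- An object `E` is spherical if `Hom(E,E[i])` is one-dimensional for `i ∈ {0,2}` and
zero otherwise. -/
def IsSpherical (E : C) : Prop :=
  homDim C E E 0 = 1 ∧ homDim C E E 2 = 1 ∧
    ∀ i : ℤ, i ≠ 0 → i ≠ 2 → ∀ f : E ⟶ E⟦i⟧, f = 0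


set_option linter.unusedSectionVars false in
lemma StabilityCondition.shift_mem (σ : StabilityCondition C) (n : ℤ) (φ : ℝ) (A : C)
    (h : A ∈ σ.P φ) : A⟦n⟧ ∈ σ.P (φ + n) := by
  induction n using Int.induction_on with
  | zero => simpa using σ.P_iso φ A (A⟦(0:ℤ)⟧) ((shiftFunctorZero C ℤ).app A).symm h
  | succ n ih =>
      have mem : (A⟦((n:ℤ)+1:ℤ)⟧)⟦(-1:ℤ)⟧ ∈ σ.P (φ + n) :=
        σ.P_iso _ _ _ ((shiftFunctorAdd' C ((n:ℤ)+1) (-1) (n:ℤ) (by ring)).app A) ih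
      have := (σ.shift (φ + n) (A⟦((n:ℤ)+1:ℤ)⟧)).mpr mem
      have hφ : (φ + ((((n:ℤ)+1:ℤ)):ℝ)) = φ + n + 1 := by push_cast; ring
      rwa [hφ]
  | pred n ih =>
      have h1 : A⟦(-(n:ℤ):ℤ)⟧ ∈ σ.P (φ + (-(n:ℤ)-1) + 1) := by
        have hφ : (φ + ((-(n:ℤ):ℤ):ℝ)) = φ + (-(n:ℤ)-1) + 1 := by push_cast; ring
        rwa [hφ] at ih
      have mem := (σ.shift (φ + (-(n:ℤ)-1)) (A⟦(-(n:ℤ):ℤ)⟧)).mp h1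
      have := σ.P_iso _ _ _
        ((shiftFunctorAdd' C (-(n:ℤ)) (-1) (-(n:ℤ)-1) (by ring)).app A).symm mem
      have hφ : (φ + ((-(n:ℤ)-1:ℤ):ℝ)) = φ + (-(n:ℤ)-1) := by push_cast; ring
      rwa [hφ]

set_option linter.unusedSectionVars false in
lemma homDim_eq_zero_of_forall_zero (E F : C) (i : ℤ) (h : ∀ f : E ⟶ F⟦i⟧, f = 0) :
    homDim C E F i = 0 := by
  have : Subsingleton (E ⟶ F⟦i⟧) := ⟨fun a b => by rw [h a, h b]⟩
  exact Module.finrank_zero_of_subsingleton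

set_option linter.unusedSectionVars false in
lemma forall_zero_of_homDim_zero (E F : C) (i : ℤ) [FiniteDimensional ℂ (E ⟶ F⟦i⟧)]
    (h : homDim C E F i = 0) : ∀ f : E ⟶ F⟦i⟧, f = 0 := by
  have : Subsingleton (E ⟶ F⟦i⟧) := Module.finrank_zero_iff.mp h
  exact fun f => Subsingleton.elim f 0

theorem ext_one_of_stable
    -- `C` is Hom-finite: each `Hom(E,F[i])` is finite dimensional and only finitely
    -- many of them are nonzero:
    (hfin : ∀ E F : C, (∀ i : ℤ, FiniteDimensional ℂ (E ⟶ F⟦i⟧)) ∧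
      Set.Finite {i : ℤ | ∃ f : E ⟶ F⟦i⟧, f ≠ 0})
    -- Serre duality in dimension 2:
    (hserre : ∀ (E F : C) (i : ℤ), homDim C E F i = homDim C F E (2 - i))
    (σ : StabilityCondition C) (E : C)
    (hsemi : ∃ φ : ℝ, E ∈ σ.P φ) (hEnz : ¬ IsZero E)
    (hhom : Module.finrank ℂ (E ⟶ E) = 1) :
    (homDim C E E 1 : ℤ) = 2 - chi C E E ∧ chi C E E ≤ 2 ∧
      (chi C E E = 2 ↔ IsSpherical C E) := by
  obtain ⟨φ, hφ⟩ := hsemi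
  haveI hinst : ∀ i : ℤ, FiniteDimensional ℂ (E ⟶ E⟦i⟧) := (hfin E E).1
  have hneg : ∀ i : ℤ, i < 0 → ∀ f : E ⟶ E⟦i⟧, f = 0 := by
    intro i hi f
    have hlt : φ + (i:ℝ) < φ := by
      have : (i:ℝ) < 0 := by exact_mod_cast hi
      linarith
    exact σ.hom_zero φ (φ + i) hlt E (E⟦i⟧) hφ (σ.shift_mem C i φ E hφ) f
  have hdneg : ∀ i : ℤ, i < 0 → homDim C E E i = 0 := fun i hi =>
    homDim_eq_zero_of_forall_zero C E E i (hneg i hi)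
  have hdgt : ∀ i : ℤ, 2 < i → homDim C E E i = 0 := by
    intro i hi
    rw [hserre E E i]
    exact hdneg _ (by omega)
  have h0 : homDim C E E 0 = 1 := by
    have e : (E ⟶ E⟦(0:ℤ)⟧) ≃ₗ[ℂ] (E ⟶ E) :=
      Linear.homCongr ℂ (Iso.refl E) ((shiftFunctorZero C ℤ).app E)
    unfold homDim
    rw [e.finrank_eq, hhom]
  have h2 : homDim C E E 2 = 1 := by
    rw [hserre E E 2]
    simpa using h0
  have hchi : chi C E E = 2 - (homDim C E E 1 : ℤ) := by
    have hsupp : Function.support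
        (fun i : ℤ => (-1:ℤ) ^ i.natAbs * (homDim C E E i : ℤ)) ⊆
        (({0,1,2} : Finset ℤ) : Set ℤ) := by
      intro i hi
      simp only [Finset.coe_insert, Finset.coe_singleton, Set.mem_insert_iff,
        Set.mem_singleton_iff]
      by_contra hc
      push_neg at hc
      apply hi
      have hz : homDim C E E i = 0 := by
        rcases lt_or_ge i 0 with h | h
        · exact hdneg i h
        · exact hdgt i (by omega)
      simp [hz]
    rw [chi, finsum_eq_sum_of_support_subset _ hsupp]
    rw [Finset.sum_insert (by decide), Finset.sum_insert (by decide),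
      Finset.sum_singleton]
    rw [h0, h2]
    norm_num
    ring
  refine ⟨by omega, ?_, ?_⟩
  · have : (0:ℤ) ≤ (homDim C E E 1 : ℤ) := Int.ofNat_nonneg _
    omega
  · constructor
    · intro hEq
      have hd10 : homDim C E E 1 = 0 := by omega
      refine ⟨h0, h2, ?_⟩
      intro i hi0 hi2 f
      rcases lt_or_ge i 0 with h | h
      · exact hneg i h f
      · rcases lt_or_ge 2 i with h' | h'
        · exact forall_zero_of_homDim_zero C E E i (hdgt i h') f
        · have : i = 1 := by omega
          subst this
          exact forall_zero_of_homDim_zero C E E 1 hd10 f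
    · intro hsph
      have : homDim C E E 1 = 0 :=
        homDim_eq_zero_of_forall_zero C E E 1 (hsph.2.2 1 one_ne_zero (by decide))
      omega
end

section
/- Let D be a ℂ-linear triangulated category such that for all objects E,F the space ⊕_i Hom(E,F[i]) is finite-dimensional over ℂ, and which satisfies Serre duality in dimension 2: dim_ℂ Hom(E,F[i]) = dim_ℂ Hom(F,E[2−i]) for all E,F and all i ∈ ℤ. Suppose A ⊆ D is the heart of a bounded t-structure on D and 0 → A → B → C → 0 is a short exact sequence in A with Hom(A,C) = 0. Then dim_ℂ Hom(A,A[1]) + dim_ℂ Hom(C,C[1]) ≤ dim_ℂ Hom(B,B[1]). -/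
/-!
STATEMENT 13 (Mukai's lemma, Lemma 5.2 of the paper): for a short exact sequence
`0 → A → B → C → 0` in the heart of a bounded t-structure with `Hom(A,C) = 0`,
`dim Ext¹(A,A) + dim Ext¹(C,C) ≤ dim Ext¹(B,B)`.
-/

open CategoryTheory CategoryTheory.Limits CategoryTheory.Pretriangulated
open CategoryTheory.Triangulated

universe v u

variable (C : Type u) [Category.{v} C] [HasZeroObject C] [HasShift C ℤ]
  [Preadditive C] [∀ n : ℤ, (CategoryTheory.shiftFunctor C n).Additive] [Pretriangulated C]
  [CategoryTheory.Linear ℂ C]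

/-- A t-structure is bounded if every object lies in `D^{≤n} ∩ D^{≥m}` for some `m ≤ n`. -/
def TStructureIsBounded (t : TStructure C) : Prop :=
  ∀ X : C, ∃ m n : ℤ, t.le n X ∧ t.ge m X

/-- The heart `D^{≤0} ∩ D^{≥0}` of a t-structure, as a predicate on objects. -/
def heartP (t : TStructure C) : C → Prop := fun X => t.le 0 X ∧ t.ge 0 X

theorem mukai_inequality
    -- `C` is Hom-finite:
    (hfin : ∀ E F : C, (∀ i : ℤ, FiniteDimensional ℂ (E ⟶ F⟦i⟧)) ∧
      Set.Finite {i : ℤ | ∃ f : E ⟶ F⟦i⟧, f ≠ 0})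
    -- Serre duality in dimension 2:
    (hserre : ∀ (E F : C) (i : ℤ), homDim C E F i = homDim C F E (2 - i))
    -- `𝒜` is the heart of a bounded t-structure:
    (t : TStructure C) (hbd : TStructureIsBounded C t)
    -- a short exact sequence `0 → A → B → X → 0` in the heart, i.e. a distinguished
    -- triangle with all three vertices in the heart:
    (A B X : C) (f : A ⟶ B) (g : B ⟶ X) (h : X ⟶ A⟦(1 : ℤ)⟧)
    (htri : Triangle.mk f g h ∈ distTriang C)
    (hA : heartP C t A) (hB : heartP C t B) (hX : heartP C t X)
    -- with `Hom(A, X) = 0`: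
    (hhom : ∀ u : A ⟶ X, u = 0) :
    homDim C A A 1 + homDim C X X 1 ≤ homDim C B B 1 := by
  classical
  -- basic vanishing lemmas derived from `hhom` and Serre duality
  have L0 : ∀ v : A ⟶ X⟦(0 : ℤ)⟧, v = 0 := by
    intro v
    have : v ≫ (shiftFunctorZero C ℤ).hom.app X = 0 := hhom _
    calc v = (v ≫ (shiftFunctorZero C ℤ).hom.app X) ≫ (shiftFunctorZero C ℤ).inv.app X := by
            simp
      _ = 0 := by rw [this, Limits.zero_comp]
  have L2 : ∀ v : X ⟶ A⟦(2 : ℤ)⟧, v = 0 := by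
    haveI : FiniteDimensional ℂ (X ⟶ A⟦(2 : ℤ)⟧) := (hfin X A).1 2
    have h0 : homDim C A X (0 : ℤ) = 0 := by
      haveI : FiniteDimensional ℂ (A ⟶ X⟦(0 : ℤ)⟧) := (hfin A X).1 0
      exact finrank_zero_iff_forall_zero.mpr L0
    have h2 : homDim C X A (2 : ℤ) = 0 := by
      have := hserre X A 2
      norm_num at this
      rw [this, h0]
    exact finrank_zero_iff_forall_zero.mp h2
  have L2' : ∀ v : X ⟶ (A⟦(1 : ℤ)⟧)⟦(1 : ℤ)⟧, v = 0 := by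
    intro v
    have e := (shiftFunctorAdd' C (1 : ℤ) (1 : ℤ) (2 : ℤ) (by norm_num)).app A
    have : v ≫ e.inv = 0 := L2 _
    calc v = (v ≫ e.inv) ≫ e.hom := by simp
      _ = 0 := by rw [this, Limits.zero_comp]
  have L2'' : ∀ v : X⟦(-1 : ℤ)⟧ ⟶ A⟦(1 : ℤ)⟧, v = 0 := by
    intro v
    have e := (shiftFunctorCompIsoId C (-1 : ℤ) (1 : ℤ) (by norm_num)).app X
    have hz : e.inv ≫ (shiftFunctor C (1 : ℤ)).map v = 0 := L2' _
    have : (shiftFunctor C (1 : ℤ)).map v = 0 := by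
      calc (shiftFunctor C (1 : ℤ)).map v
          = e.hom ≫ (e.inv ≫ (shiftFunctor C (1 : ℤ)).map v) := by simp
        _ = 0 := by rw [hz, Limits.comp_zero]
    apply (shiftFunctor C (1 : ℤ)).map_injective
    rw [this, Functor.map_zero]
  have LAX : ∀ v : A⟦(1 : ℤ)⟧ ⟶ X⟦(1 : ℤ)⟧, v = 0 := by
    intro v
    obtain ⟨w, hw⟩ := (shiftFunctor C (1 : ℤ)).map_surjective v
    rw [← hw, hhom w, Functor.map_zero]
  -- the four linear maps
  haveI : FiniteDimensional ℂ (A ⟶ A⟦(1 : ℤ)⟧) := (hfin A A).1 1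
  haveI : FiniteDimensional ℂ (A ⟶ B⟦(1 : ℤ)⟧) := (hfin A B).1 1
  haveI : FiniteDimensional ℂ (B ⟶ B⟦(1 : ℤ)⟧) := (hfin B B).1 1
  haveI : FiniteDimensional ℂ (X ⟶ B⟦(1 : ℤ)⟧) := (hfin X B).1 1
  haveI : FiniteDimensional ℂ (X ⟶ X⟦(1 : ℤ)⟧) := (hfin X X).1 1
  set Θ : (B ⟶ B⟦(1 : ℤ)⟧) →ₗ[ℂ] (A ⟶ B⟦(1 : ℤ)⟧) :=
    CategoryTheory.Linear.leftComp ℂ (B⟦(1 : ℤ)⟧) f with hΘ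
  set Φ : (A ⟶ A⟦(1 : ℤ)⟧) →ₗ[ℂ] (A ⟶ B⟦(1 : ℤ)⟧) :=
    CategoryTheory.Linear.rightComp ℂ A ((shiftFunctor C (1 : ℤ)).map f) with hΦ
  set G : (X ⟶ B⟦(1 : ℤ)⟧) →ₗ[ℂ] (B ⟶ B⟦(1 : ℤ)⟧) :=
    CategoryTheory.Linear.leftComp ℂ (B⟦(1 : ℤ)⟧) g with hG
  set S : (X ⟶ B⟦(1 : ℤ)⟧) →ₗ[ℂ] (X ⟶ X⟦(1 : ℤ)⟧) :=
    CategoryTheory.Linear.rightComp ℂ X ((shiftFunctor C (1 : ℤ)).map g) with hS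
  -- Φ is injective
  have h1 : Function.Injective Φ := by
    rw [← LinearMap.ker_eq_bot, LinearMap.ker_eq_bot']
    intro ε hε
    have hε' : ε ≫ (Triangle.mk f g h).mor₁⟦(1 : ℤ)⟧' = 0 := hε
    obtain ⟨u, hu⟩ := Triangle.coyoneda_exact₁ _ htri ε hε'
    rw [hu, hhom u]; exact Limits.zero_comp
  -- range Φ ≤ range Θ
  have h2 : LinearMap.range Φ ≤ LinearMap.range Θ := by
    rintro _ ⟨ε, rfl⟩
    have hcond : (Triangle.invRotate (Triangle.mk f g h)).mor₁ ≫
        (ε ≫ (shiftFunctor C (1 : ℤ)).map f) = 0 := by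
      erw [← Category.assoc]
      have : (Triangle.invRotate (Triangle.mk f g h)).mor₁ ≫ ε = 0 := L2'' _
      rw [this, Limits.zero_comp]
    obtain ⟨e, he⟩ := Triangle.yoneda_exact₂ _ (inv_rot_of_distTriang _ htri)
      (ε ≫ (shiftFunctor C (1 : ℤ)).map f) hcond
    exact ⟨e, he.symm⟩
  -- range G ≤ ker Θ
  have h3 : LinearMap.range G ≤ LinearMap.ker Θ := by
    rintro _ ⟨ψ, rfl⟩
    have hfg : f ≫ g = 0 := comp_distTriang_mor_zero₁₂ _ htri
    show f ≫ (g ≫ ψ) = 0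
    rw [← Category.assoc, hfg, Limits.zero_comp]
  -- ker G ≤ ker S
  have h4 : LinearMap.ker G ≤ LinearMap.ker S := by
    intro ψ hψ
    have hψ' : (Triangle.mk f g h).mor₂ ≫ ψ = 0 := hψ
    obtain ⟨u, hu⟩ := Triangle.yoneda_exact₃ _ htri ψ hψ'
    show ψ ≫ (shiftFunctor C (1 : ℤ)).map g = 0
    erw [hu, Category.assoc, LAX (u ≫ (shiftFunctor C (1 : ℤ)).map g), Limits.comp_zero]
  -- S is surjective
  have h5 : Function.Surjective S := by
    intro ξ
    have T₃ := rot_of_distTriang _ (rot_of_distTriang _ (rot_of_distTriang _ htri))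
    have hz : ξ ≫ (shiftFunctor C (1 : ℤ)).map h = 0 := L2' _
    have hcond : ξ ≫ ((Triangle.mk f g h).rotate.rotate.rotate).mor₃ = 0 := by
      dsimp [Triangle.rotate]
      erw [Preadditive.comp_neg, hz, neg_zero]; rfl
    obtain ⟨ψ, hψ⟩ := Triangle.coyoneda_exact₃ _ T₃ ξ hcond
    have hψ' : ξ = -(ψ ≫ (shiftFunctor C (1 : ℤ)).map g) := by
      rw [hψ]; dsimp [Triangle.rotate]; erw [Preadditive.comp_neg]; rfl
    refine ⟨-ψ, ?_⟩
    show (-ψ) ≫ (shiftFunctor C (1 : ℤ)).map g = ξ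
    erw [Preadditive.neg_comp]
    exact hψ'.symm
  -- finish by linear algebra
  have eA : homDim C A A 1 = Module.finrank ℂ (LinearMap.range Φ) :=
    (LinearMap.finrank_range_of_inj h1).symm
  have eX : homDim C X X 1 = Module.finrank ℂ (LinearMap.range S) := by
    rw [LinearMap.range_eq_top.mpr h5]
    exact (finrank_top ℂ _).symm
  have iAB : Module.finrank ℂ (LinearMap.range Φ) ≤ Module.finrank ℂ (LinearMap.range Θ) :=
    Submodule.finrank_mono h2
  have iGΘ : Module.finrank ℂ (LinearMap.range G) ≤ Module.finrank ℂ (LinearMap.ker Θ) :=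
    Submodule.finrank_mono h3
  have ikGS : Module.finrank ℂ (LinearMap.ker G) ≤ Module.finrank ℂ (LinearMap.ker S) :=
    Submodule.finrank_mono h4
  have rnΘ := LinearMap.finrank_range_add_finrank_ker Θ
  have rnG := LinearMap.finrank_range_add_finrank_ker G
  have rnS := LinearMap.finrank_range_add_finrank_ker S
  have hBB : homDim C B B 1 = Module.finrank ℂ (B ⟶ B⟦(1 : ℤ)⟧) := rfl
  have hXB : Module.finrank ℂ (LinearMap.range S) ≤ Module.finrank ℂ (LinearMap.range G) := by
    omega
  rw [eA, eX, hBB, ← rnΘ]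
  omega
end

section
/- Let σ = (Z,P) be a stability condition on a triangulated category D such that P(1) is an abelian category whose short exact sequences are the distinguished triangles in D with all three vertices in P(1), and let A ∈ P(1) be stable, i.e. a simple object of P(1). Suppose given a distinguished triangle C → A →^f D → C[1] with C ∈ P([0,∞)), D ∈ P((−∞,1]), and f ≠ 0. Then C ∈ P(0) and D ∈ P(1). -/
/-!
STATEMENT 16 (Lemma 12.3 of the paper): given a stable object `A ∈ P(1)` and a
distinguished triangle `C → A → D → C[1]` with `C ∈ P([0,∞))`, `D ∈ P((-∞,1])` and
`A → D` nonzero, one has `C ∈ P(0)` and `D ∈ P(1)`.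
-/

open CategoryTheory CategoryTheory.Limits CategoryTheory.Pretriangulated
open CategoryTheory.Triangulated

universe v u

variable (C : Type u) [Category.{v} C] [HasZeroObject C] [HasShift C ℤ]
  [Preadditive C] [∀ n : ℤ, (CategoryTheory.shiftFunctor C n).Additive] [Pretriangulated C]

/-- The extension-closed full subcategory `P(I)` of `C` generated by the subcategories
`P(φ)` for `φ ∈ I`. -/
inductive PCat (P : ℝ → Set C) (I : Set ℝ) : C → Prop
  | of (φ : ℝ) (hφ : φ ∈ I) (E : C) (hE : E ∈ P φ) : PCat P I E
  | zero (E : C) (hE : IsZero E) : PCat P I E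
  | iso (E F : C) (e : E ≅ F) (hE : PCat P I E) : PCat P I F
  | ext (A E B : C) (f : A ⟶ E) (g : E ⟶ B) (h : B ⟶ A⟦(1 : ℤ)⟧)
      (hT : Triangle.mk f g h ∈ distTriang C) (hA : PCat P I A) (hB : PCat P I B) :
      PCat P I E

/-- An object `S` is stable of phase `φ` in `σ` if it is a simple object of the abelian
category `P(φ)`, whose short exact sequences are the distinguished triangles of `C` with
all three vertices in `P(φ)`. -/
def StabilityCondition.IsStableIn (σ : StabilityCondition C) (φ : ℝ) (S : C) : Prop :=
  S ∈ σ.P φ ∧ ¬ IsZero S ∧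
  ∀ (A B : C) (f : A ⟶ S) (g : S ⟶ B) (h : B ⟶ A⟦(1 : ℤ)⟧),
    (Triangle.mk f g h ∈ distTriang C) → A ∈ σ.P φ → B ∈ σ.P φ →
      IsZero A ∨ IsZero B

/-! ### Auxiliary lemmas -/

section Aux

open ZeroObject

lemma PCat_mono {P : ℝ → Set C} {I J : Set ℝ} (hIJ : I ⊆ J) {E : C}
    (h : PCat C P I E) : PCat C P J E := by
  induction h with
  | of φ hφ E hE => exact PCat.of φ (hIJ hφ) E hE
  | zero E hE => exact PCat.zero E hE
  | iso E F e _ ih => exact PCat.iso E F e ih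
  | ext A E B f g h hT _ _ ihA ihB => exact PCat.ext A E B f g h hT ihA ihB

/-- Maps from a semistable object of phase `φ` to an object of `P(I)` with `I < φ`
vanish. -/
lemma hom_zero_to_PCat (σ : StabilityCondition C) {φ : ℝ} {I : Set ℝ}
    (hI : ∀ ψ ∈ I, ψ < φ) {S : C} (hS : S ∈ σ.P φ) {E : C}
    (hE : PCat C σ.P I E) : ∀ u : S ⟶ E, u = 0 := by
  induction hE with
  | of ψ hψ B hB => exact fun u => σ.hom_zero φ ψ (hI ψ hψ) S B hS hB u
  | zero B hB => exact fun u => hB.eq_of_tgt u 0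
  | iso E F e _ ih =>
      intro u
      have h1 : u ≫ e.inv = 0 := ih (u ≫ e.inv)
      calc u = (u ≫ e.inv) ≫ e.hom := by simp
        _ = 0 := by rw [h1, zero_comp]
  | ext A E B f' g' h' hT _ _ ihA ihB =>
      intro u
      have h1 : u ≫ g' = 0 := ihB (u ≫ g')
      obtain ⟨v, hv⟩ := Triangle.coyoneda_exact₂ _ hT u h1
      rw [hv, ihA v]; exact zero_comp

/-- Maps from an object of `P(I)` to a semistable object of phase `φ` with `φ < I`
vanish. -/
lemma hom_zero_from_PCat (σ : StabilityCondition C) {φ : ℝ} {I : Set ℝ}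
    (hI : ∀ ψ ∈ I, φ < ψ) {S : C} (hS : S ∈ σ.P φ) {E : C}
    (hE : PCat C σ.P I E) : ∀ u : E ⟶ S, u = 0 := by
  induction hE with
  | of ψ hψ B hB => exact fun u => σ.hom_zero ψ φ (hI ψ hψ) B S hB hS u
  | zero B hB => exact fun u => hB.eq_of_src u 0
  | iso E F e _ ih =>
      intro u
      have h1 : e.hom ≫ u = 0 := ih (e.hom ≫ u)
      calc u = e.inv ≫ (e.hom ≫ u) := by simp
        _ = 0 := by rw [h1, comp_zero]
  | ext A E B f' g' h' hT _ _ ihA ihB =>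
      intro u
      have h1 : f' ≫ u = 0 := ihA (f' ≫ u)
      obtain ⟨v, hv⟩ := Triangle.yoneda_exact₂ _ hT u h1
      rw [hv, ihB v]; exact comp_zero

lemma mem_shift_neg (σ : StabilityCondition C) {φ : ℝ} {E : C} (hE : E ∈ σ.P φ) :
    E⟦(-1 : ℤ)⟧ ∈ σ.P (φ - 1) :=
  (σ.shift (φ - 1) E).mp (by rwa [show φ - 1 + 1 = φ by ring])

lemma mem_shift_one (σ : StabilityCondition C) {φ : ℝ} {E : C} (hE : E ∈ σ.P φ) :
    E⟦(1 : ℤ)⟧ ∈ σ.P (φ + 1) :=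
  (σ.shift φ (E⟦(1 : ℤ)⟧)).mpr (σ.P_iso φ E _ (shiftShiftNeg E 1).symm hE)

lemma PCat_shift_neg (σ : StabilityCondition C) {I : Set ℝ} {E : C}
    (hE : PCat C σ.P I E) : PCat C σ.P {φ | φ + 1 ∈ I} (E⟦(-1 : ℤ)⟧) := by
  induction hE with
  | of ψ hψ B hB =>
      exact PCat.of (ψ - 1) (by simpa [show ψ - 1 + 1 = ψ by ring] using hψ) _
        (mem_shift_neg C σ hB)
  | zero B hB => exact PCat.zero _ ((shiftFunctor C (-1 : ℤ)).map_isZero hB)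
  | iso E F e _ ih => exact PCat.iso _ _ ((shiftFunctor C (-1 : ℤ)).mapIso e) ih
  | ext A E B f g h hT _ _ ihA ihB =>
      exact PCat.ext _ _ _ _ _ _ (Triangle.shift_distinguished _ hT (-1)) ihA ihB

lemma PCat_shift_one (σ : StabilityCondition C) {I : Set ℝ} {E : C}
    (hE : PCat C σ.P I E) : PCat C σ.P {φ | φ - 1 ∈ I} (E⟦(1 : ℤ)⟧) := by
  induction hE with
  | of ψ hψ B hB =>
      exact PCat.of (ψ + 1) (by simpa [show ψ + 1 - 1 = ψ by ring] using hψ) _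
        (mem_shift_one C σ hB)
  | zero B hB => exact PCat.zero _ ((shiftFunctor C (1 : ℤ)).map_isZero hB)
  | iso E F e _ ih => exact PCat.iso _ _ ((shiftFunctor C (1 : ℤ)).mapIso e) ih
  | ext A E B f g h hT _ _ ihA ihB =>
      exact PCat.ext _ _ _ _ _ _ (Triangle.shift_distinguished _ hT 1) ihA ihB

lemma HN_pos_of_nonzero {P : ℝ → Set C} {E : C} (F : HNFiltration C P E)
    (hE : ¬ IsZero E) : 0 < F.n := by
  rcases Nat.eq_zero_or_pos F.n with h | h
  · exfalso
    apply hE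
    have e : Fin.last F.n = 0 := by ext; simp [h]
    rw [← F.obj_last, e]
    exact F.obj_zero
  · exact h

lemma HN_obj_mem {P : ℝ → Set C} {E : C} (F : HNFiltration C P E) (I : Set ℝ)
    (hI : ∀ j : Fin F.n, F.phase j ∈ I) :
    ∀ (k : ℕ) (hk : k < F.n + 1), PCat C P I (F.obj ⟨k, hk⟩) := by
  intro k
  induction k with
  | zero =>
      intro hk
      refine PCat.zero _ ?_
      rw [show (⟨0, hk⟩ : Fin (F.n + 1)) = 0 from by ext; simp]
      exact F.obj_zero
  | succ k ih =>
      intro hk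
      have hkn : k < F.n := by omega
      obtain ⟨f, g, h, hT⟩ := F.triangle ⟨k, hkn⟩
      exact PCat.ext _ _ _ f g h hT (ih (by omega))
        (PCat.of _ (hI ⟨k, hkn⟩) _ (F.fac_mem _))

lemma HN_chain {P : ℝ → Set C} {E : C} (F : HNFiltration C P E) (hn : 0 < F.n) :
    ∃ ι : F.fac ⟨0, hn⟩ ⟶ E,
      ∀ B : C, (∀ (j : Fin F.n) (u : B ⟶ (F.fac j)⟦(-1 : ℤ)⟧), u = 0) →
        ∀ δ : B ⟶ F.fac ⟨0, hn⟩, δ ≫ ι = 0 → δ = 0 := by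
  have key : ∀ (k : ℕ), 0 < k → ∀ (hk : k < F.n + 1),
      ∃ ι : F.fac ⟨0, hn⟩ ⟶ F.obj ⟨k, hk⟩,
        ∀ B : C, (∀ (j : Fin F.n) (u : B ⟶ (F.fac j)⟦(-1 : ℤ)⟧), u = 0) →
          ∀ δ : B ⟶ F.fac ⟨0, hn⟩, δ ≫ ι = 0 → δ = 0 := by
    intro k
    induction k with
    | zero => intro h; exact absurd h (lt_irrefl 0)
    | succ k ih =>
        intro _ hk
        rcases Nat.eq_zero_or_pos k with rfl | hkpos
        · obtain ⟨f, g, h, hT⟩ := F.triangle ⟨0, hn⟩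
          have hz : IsZero (F.obj (⟨0, hn⟩ : Fin F.n).castSucc) := by
            rw [show (⟨0, hn⟩ : Fin F.n).castSucc = 0 from by ext; simp]
            exact F.obj_zero
          have : IsIso g := (Triangle.isZero₁_iff_isIso₂ _ hT).mp hz
          refine ⟨inv g, fun B hB δ hδ => ?_⟩
          calc δ = (δ ≫ inv g) ≫ g := by simp
            _ = 0 := by rw [hδ, zero_comp]
        · obtain ⟨ι, hι⟩ := ih hkpos (by omega)
          have hkn : k < F.n := by omega
          obtain ⟨f, g, h, hT⟩ := F.triangle ⟨k, hkn⟩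
          refine ⟨ι ≫ f, fun B hB δ hδ => ?_⟩
          have h1 : (δ ≫ ι) ≫ f = 0 := by
            rw [Category.assoc]; exact hδ
          obtain ⟨ε, hε⟩ := Triangle.coyoneda_exact₂ _
            (inv_rot_of_distTriang _ hT) (δ ≫ ι) h1
          have hε0 : ε = 0 := hB ⟨k, hkn⟩ ε
          refine hι B hB δ ?_
          rw [hε0] at hε; exact hε.trans zero_comp
  obtain ⟨ι, hι⟩ := key F.n hn (by omega)
  have e : F.obj ⟨F.n, by omega⟩ = E := F.obj_last
  refine ⟨ι ≫ eqToHom e, fun B hB δ hδ => ?_⟩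
  refine hι B hB δ ?_
  have h2 := congrArg (fun t => t ≫ eqToHom e.symm) hδ
  simpa using h2

lemma HN_quot_ne_zero (σ : StabilityCondition C) {E : C}
    (F : HNFiltration C σ.P E) (hn : 0 < F.n) :
    ∃ π : E ⟶ F.fac ⟨F.n - 1, by omega⟩, π ≠ 0 := by
  obtain ⟨f, g, h, hT⟩ := F.triangle ⟨F.n - 1, by omega⟩
  have e : F.obj (⟨F.n - 1, by omega⟩ : Fin F.n).succ = E := by
    rw [show (⟨F.n - 1, by omega⟩ : Fin F.n).succ = Fin.last F.n from by
      ext; simp; omega]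
    exact F.obj_last
  refine ⟨eqToHom e.symm ≫ g, ?_⟩
  intro h0
  have hg : g = 0 := by
    have h2 := congrArg (fun t => eqToHom e ≫ t) h0
    simpa using h2
  obtain ⟨s, hs⟩ := Triangle.yoneda_exact₃ _ hT (𝟙 _) (by rw [hg]; exact zero_comp)
  have hmem : PCat C σ.P (Set.Ici (F.phase ⟨F.n - 1, by omega⟩))
      (F.obj (⟨F.n - 1, by omega⟩ : Fin F.n).castSucc) := by
    refine HN_obj_mem C F _ (fun j => F.phase_strictAnti.antitone ?_) (F.n - 1) (by omega)
    exact Fin.le_def.mpr (by have := j.isLt; simp; omega)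
  have hs0 : s = 0 := by
    refine hom_zero_from_PCat C σ (I := {ψ | ψ - 1 ∈ Set.Ici (F.phase ⟨F.n - 1, by omega⟩)})
      (fun ψ hψ => ?_) (F.fac_mem _) (PCat_shift_one C σ hmem) s
    simp only [Set.mem_setOf_eq, Set.mem_Ici] at hψ
    linarith
  rw [hs0, comp_zero] at hs
  exact F.fac_nonzero _ ((Limits.IsZero.iff_id_eq_zero _).mpr hs)

lemma HN_top_le (σ : StabilityCondition C) {b : ℝ} {E : C}
    (hE : PCat C σ.P (Set.Iic b) E) (F : HNFiltration C σ.P E) :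
    ∀ j : Fin F.n, F.phase j ≤ b := by
  intro j
  have hn : 0 < F.n := j.pos
  have h0 : F.phase ⟨0, hn⟩ ≤ b := by
    by_contra hgt
    push_neg at hgt
    obtain ⟨ι, hι⟩ := HN_chain C F hn
    have hι0 : ι = 0 :=
      hom_zero_to_PCat C σ (fun ψ hψ => lt_of_le_of_lt hψ hgt) (F.fac_mem _) hE ι
    have hid : 𝟙 (F.fac ⟨0, hn⟩) = 0 := by
      refine hι _ (fun i u => ?_) (𝟙 _) (by rw [Category.id_comp, hι0])
      refine σ.hom_zero (F.phase ⟨0, hn⟩) (F.phase i - 1) ?_ _ _ (F.fac_mem _)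
        (mem_shift_neg C σ (F.fac_mem i)) u
      have : F.phase i ≤ F.phase ⟨0, hn⟩ :=
        F.phase_strictAnti.antitone (Fin.le_def.mpr (by simp))
      linarith
    exact F.fac_nonzero _ ((Limits.IsZero.iff_id_eq_zero _).mpr hid)
  exact le_trans (F.phase_strictAnti.antitone (Fin.le_def.mpr (by simp))) h0

lemma HN_bot_ge (σ : StabilityCondition C) {a : ℝ} {E : C}
    (hE : PCat C σ.P (Set.Ici a) E) (F : HNFiltration C σ.P E) :
    ∀ j : Fin F.n, a ≤ F.phase j := by
  intro j
  have hn : 0 < F.n := j.pos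
  have hlast : a ≤ F.phase ⟨F.n - 1, by omega⟩ := by
    by_contra hlt
    push_neg at hlt
    obtain ⟨π, hπ⟩ := HN_quot_ne_zero C σ F hn
    exact hπ (hom_zero_from_PCat C σ (fun ψ hψ => lt_of_lt_of_le hlt hψ)
      (F.fac_mem _) hE π)
  exact le_trans hlast (F.phase_strictAnti.antitone
    (Fin.le_def.mpr (by have := j.isLt; simp; omega)))

lemma HN_mem_of_const (σ : StabilityCondition C) {c : ℝ} {E : C}
    (hE : ¬ IsZero E) (F : HNFiltration C σ.P E) (h : ∀ j, F.phase j = c) :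
    E ∈ σ.P c := by
  have hn : 0 < F.n := HN_pos_of_nonzero C F hE
  have hn1 : F.n = 1 := by
    by_contra hne
    have h2 : 2 ≤ F.n := by omega
    have hlt : F.phase ⟨1, by omega⟩ < F.phase ⟨0, by omega⟩ :=
      F.phase_strictAnti (by exact Fin.mk_lt_mk.mpr (by omega))
    rw [h, h] at hlt
    exact lt_irrefl _ hlt
  obtain ⟨f, g, h3, hT⟩ := F.triangle ⟨0, hn⟩
  have hz : IsZero (F.obj (⟨0, hn⟩ : Fin F.n).castSucc) := by
    rw [show (⟨0, hn⟩ : Fin F.n).castSucc = 0 from by ext; simp]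
    exact F.obj_zero
  have : IsIso g := (Triangle.isZero₁_iff_isIso₂ _ hT).mp hz
  have e2 : F.obj (⟨0, hn⟩ : Fin F.n).succ = E := by
    rw [show (⟨0, hn⟩ : Fin F.n).succ = Fin.last F.n from by ext; simp [hn1]]
    exact F.obj_last
  exact σ.P_iso c _ _ ((asIso g).symm ≪≫ eqToIso e2) (h _ ▸ F.fac_mem ⟨0, hn⟩)

lemma mul_exp_im (m x : ℝ) :
    ((m : ℂ) * Complex.exp ((Real.pi : ℂ) * (x : ℂ) * Complex.I)).im
      = m * Real.sin (Real.pi * x) := by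
  rw [show ((Real.pi : ℂ) * (x : ℂ) * Complex.I) = ((Real.pi * x : ℝ) : ℂ) * Complex.I by
    push_cast; ring, Complex.exp_mul_I, ← Complex.ofReal_cos, ← Complex.ofReal_sin]
  generalize Real.sin (Real.pi * x) = s
  generalize Real.cos (Real.pi * x) = c
  simp [Complex.mul_im, Complex.add_im, Complex.add_re, Complex.mul_re]

lemma Z_zero_obj (σ : StabilityCondition C) : σ.Z (0 : C) = 0 :=
  left_eq_add.mp (σ.additive _ (contractible_distinguished (0 : C)))

lemma Z_iso (σ : StabilityCondition C) {A B : C} (e : A ≅ B) : σ.Z A = σ.Z B := by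
  have hd : Triangle.mk e.hom (0 : B ⟶ (0 : C)) (0 : (0 : C) ⟶ A⟦(1 : ℤ)⟧) ∈
      distTriang C := by
    refine isomorphic_distinguished _ (contractible_distinguished A) _ ?_
    exact Triangle.isoMk _ _ (Iso.refl A) e.symm (Iso.refl 0) (by simp; exact e.hom_inv_id.trans (Category.id_comp _).symm)
      (by simp; exact zero_comp.trans comp_zero.symm) (by simp; exact zero_comp.trans zero_comp.symm)
  have h2 := σ.additive _ hd
  rw [show (Triangle.mk e.hom (0 : B ⟶ (0 : C)) (0 : (0 : C) ⟶ A⟦(1 : ℤ)⟧)).obj₃ =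
    (0 : C) from rfl] at h2
  simp only [Triangle.mk_obj₁, Triangle.mk_obj₂] at h2
  rw [Z_zero_obj C σ, add_zero] at h2
  exact h2.symm

lemma Z_isZero (σ : StabilityCondition C) {W : C} (hW : IsZero W) : σ.Z W = 0 := by
  rw [Z_iso C σ hW.isoZero, Z_zero_obj C σ]

end Aux

theorem triangle_on_stable_object (σ : StabilityCondition C)
    (A : C) (hA : σ.IsStableIn C 1 A)
    (X D : C) (g : X ⟶ A) (f : A ⟶ D) (h : D ⟶ X⟦(1 : ℤ)⟧)
    (htri : Triangle.mk g f h ∈ distTriang C)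
    (hX : PCat C σ.P (Set.Ici 0) X) (hD : PCat C σ.P (Set.Iic 1) D)
    (hf : f ≠ 0) :
    X ∈ σ.P 0 ∧ D ∈ σ.P 1 := by
  obtain ⟨hA1, hAnz, hAstable⟩ := hA
  -- Step 1: `D ∈ σ.P 1`
  have hDnz : ¬ IsZero D := fun hz => hf (hz.eq_of_tgt f 0)
  obtain ⟨F⟩ := σ.HN D hDnz
  have hFn : 0 < F.n := HN_pos_of_nonzero C F hDnz
  have htop : ∀ j, F.phase j ≤ 1 := HN_top_le C σ hD F
  have hbot : (1 : ℝ) ≤ F.phase ⟨F.n - 1, by omega⟩ := by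
    by_contra hlt
    push_neg at hlt
    obtain ⟨π, hπ⟩ := HN_quot_ne_zero C σ F hFn
    apply hπ
    have hfπ : f ≫ π = 0 := σ.hom_zero 1 _ hlt A _ hA1 (F.fac_mem _) (f ≫ π)
    obtain ⟨t, ht⟩ := Triangle.yoneda_exact₂ _ (rot_of_distTriang _ htri) π hfπ
    have ht0 : t = 0 := by
      refine hom_zero_from_PCat C σ (I := {ψ | ψ - 1 ∈ Set.Ici 0}) (fun ψ hψ => ?_)
        (F.fac_mem _) (PCat_shift_one C σ hX) t
      simp only [Set.mem_setOf_eq, Set.mem_Ici] at hψ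
      linarith
    rw [ht, ht0]; exact comp_zero
  have hD1 : D ∈ σ.P 1 := by
    refine HN_mem_of_const C σ hDnz F (fun j => le_antisymm (htop j) ?_)
    exact le_trans hbot (F.phase_strictAnti.antitone
      (Fin.le_def.mpr (by have := j.isLt; simp; omega)))
  refine ⟨?_, hD1⟩
  -- Step 2: `X ∈ σ.P 0`
  by_cases hXz : IsZero X
  · exact σ.P_zero 0 X hXz
  obtain ⟨G⟩ := σ.HN X hXz
  have hGn : 0 < G.n := HN_pos_of_nonzero C G hXz
  have hXbot : ∀ j, 0 ≤ G.phase j := HN_bot_ge C σ hX G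
  obtain ⟨ι, hι⟩ := HN_chain C G hGn
  set φ := G.phase ⟨0, hGn⟩ with hφdef
  have hXtop : φ ≤ 0 := by
    by_contra hpos
    push_neg at hpos
    -- the composite `ι ≫ g` is nonzero
    have hv'nz : ι ≫ g ≠ 0 := by
      intro h0
      obtain ⟨ε, hε⟩ := Triangle.coyoneda_exact₂ _ (inv_rot_of_distTriang _ htri) ι h0
      have hε0 : ε = 0 := by
        refine hom_zero_to_PCat C σ (I := {ψ | ψ + 1 ∈ Set.Iic 1}) (fun ψ hψ => ?_)
          (G.fac_mem _) (PCat_shift_neg C σ hD) ε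
        simp only [Set.mem_setOf_eq, Set.mem_Iic] at hψ
        linarith
      have hι0 : ι = 0 := by rw [hε, hε0]; exact zero_comp
      have hid : 𝟙 (G.fac ⟨0, hGn⟩) = 0 := by
        refine hι _ (fun i u => ?_) (𝟙 _) (by rw [Category.id_comp, hι0])
        refine σ.hom_zero φ (G.phase i - 1) ?_ _ _ (G.fac_mem _)
          (mem_shift_neg C σ (G.fac_mem i)) u
        have h2 : G.phase i ≤ φ := G.phase_strictAnti.antitone (Fin.le_def.mpr (by simp))
        linarith
      exact G.fac_nonzero _ ((Limits.IsZero.iff_id_eq_zero _).mpr hid)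
    have hφ1 : φ ≤ 1 := by
      by_contra hgt
      push_neg at hgt
      exact hv'nz (σ.hom_zero φ 1 hgt _ _ (G.fac_mem _) hA1 (ι ≫ g))
    -- the cone `Q` of `ι ≫ g` lies in `P 1`
    obtain ⟨Q, p, w, hQtri⟩ := distinguished_cocone_triangle (ι ≫ g)
    have hQ1 : Q ∈ σ.P 1 := by
      by_cases hQz : IsZero Q
      · exact σ.P_zero 1 Q hQz
      have hQmem : PCat C σ.P (Set.Ici 1) Q := by
        refine PCat.ext A Q _ p w _ (rot_of_distTriang _ hQtri) ?_ ?_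
        · exact PCat.of 1 (le_refl 1) A hA1
        · refine PCat.of (φ + 1) (by simp only [Set.mem_Ici]; linarith) _
            (mem_shift_one C σ (G.fac_mem _))
      obtain ⟨K⟩ := σ.HN Q hQz
      have hKn : 0 < K.n := HN_pos_of_nonzero C K hQz
      have hKbot : ∀ j, 1 ≤ K.phase j := HN_bot_ge C σ hQmem K
      obtain ⟨β, hβ⟩ := HN_chain C K hKn
      set ψ := K.phase ⟨0, hKn⟩ with hψdef
      have hKtop : ψ ≤ 1 := by
        by_contra hψgt
        push_neg at hψgt
        have hβnz : β ≠ 0 := by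
          intro hβ0
          have hid : 𝟙 (K.fac ⟨0, hKn⟩) = 0 := by
            refine hβ _ (fun i u => ?_) (𝟙 _) (by rw [Category.id_comp, hβ0])
            refine σ.hom_zero ψ (K.phase i - 1) ?_ _ _ (K.fac_mem _)
              (mem_shift_neg C σ (K.fac_mem i)) u
            have h2 : K.phase i ≤ ψ := K.phase_strictAnti.antitone (Fin.le_def.mpr (by simp))
            linarith
          exact K.fac_nonzero _ ((Limits.IsZero.iff_id_eq_zero _).mpr hid)
        have hγnz : β ≫ w ≠ 0 := by
          intro h0
          obtain ⟨ε, hε⟩ := Triangle.coyoneda_exact₂ _ (rot_of_distTriang _ hQtri) β h0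
          have hε0 : ε = 0 := σ.hom_zero ψ 1 hψgt _ _ (K.fac_mem _) hA1 ε
          exact hβnz (by rw [hε, hε0]; exact zero_comp)
        have hγv : (β ≫ w) ≫ (ι ≫ g)⟦(1 : ℤ)⟧' = 0 := by
          have hz31 : w ≫ (ι ≫ g)⟦(1 : ℤ)⟧' = 0 := comp_distTriang_mor_zero₃₁ _ hQtri
          rw [Category.assoc, hz31, comp_zero]
        set eA := (shiftFunctorCompIsoId C (1 : ℤ) (-1 : ℤ) (by omega)).hom with heA
        set δ : (K.fac ⟨0, hKn⟩)⟦(-1 : ℤ)⟧ ⟶ G.fac ⟨0, hGn⟩ :=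
          ((β ≫ w)⟦(-1 : ℤ)⟧') ≫ eA.app (G.fac ⟨0, hGn⟩) with hδdef
        have hδv : δ ≫ (ι ≫ g) = 0 := by
          have hn' : eA.app (G.fac ⟨0, hGn⟩) ≫ (ι ≫ g) =
              (((ι ≫ g)⟦(1 : ℤ)⟧')⟦(-1 : ℤ)⟧') ≫ eA.app A := by
            simpa using (eA.naturality (ι ≫ g)).symm
          rw [hδdef, Category.assoc, hn', ← Category.assoc, ← Functor.map_comp, hγv,
            Functor.map_zero, zero_comp]
        have hδι : δ ≫ ι = 0 := by
          have h1 : (δ ≫ ι) ≫ g = 0 := by rw [Category.assoc]; exact hδv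
          obtain ⟨ε, hε⟩ := Triangle.coyoneda_exact₂ _ (inv_rot_of_distTriang _ htri)
            (δ ≫ ι) h1
          have hε0 : ε = 0 := by
            refine hom_zero_to_PCat C σ (I := {ψ' | ψ' + 1 ∈ Set.Iic 1}) (fun ψ' hψ' => ?_)
              (mem_shift_neg C σ (K.fac_mem ⟨0, hKn⟩)) (PCat_shift_neg C σ hD) ε
            simp only [Set.mem_setOf_eq, Set.mem_Iic] at hψ'
            linarith
          rw [hε0] at hε; exact hε.trans zero_comp
        have hδ0 : δ = 0 := by
          refine hι _ (fun i u => ?_) δ hδι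
          refine σ.hom_zero (ψ - 1) (G.phase i - 1) ?_ _ _
            (mem_shift_neg C σ (K.fac_mem _)) (mem_shift_neg C σ (G.fac_mem i)) u
          have h2 : G.phase i ≤ φ := G.phase_strictAnti.antitone (Fin.le_def.mpr (by simp))
          linarith
        apply hγnz
        have h3 : ((β ≫ w)⟦(-1 : ℤ)⟧') = 0 := by
          have h4 : ((β ≫ w)⟦(-1 : ℤ)⟧') ≫ eA.app (G.fac ⟨0, hGn⟩) =
              0 ≫ eA.app (G.fac ⟨0, hGn⟩) := by
            rw [zero_comp]; exact hδ0
          exact (cancel_mono _).mp h4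
        exact ((shiftFunctor C (-1 : ℤ)).map_eq_zero_iff).mp h3
      refine HN_mem_of_const C σ hQz K (fun j => le_antisymm ?_ (hKbot j))
      exact le_trans (K.phase_strictAnti.antitone (Fin.le_def.mpr (by simp))) hKtop
    -- dichotomy on `φ`
    rcases lt_or_eq_of_le hφ1 with hφlt | hφeq
    · -- `0 < φ < 1` : contradiction with the central charge
      have hZ : σ.Z (G.fac ⟨0, hGn⟩) = σ.Z (Q⟦(-1 : ℤ)⟧) + σ.Z A :=
        σ.additive _ (inv_rot_of_distTriang _ hQtri)
      have hQneg : Q⟦(-1 : ℤ)⟧ ∈ σ.P 0 := by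
        have h5 := mem_shift_neg C σ hQ1
        rwa [show (1 : ℝ) - 1 = 0 by norm_num] at h5
      obtain ⟨m1, hm1, hZ1⟩ := σ.central φ _ (G.fac_mem ⟨0, hGn⟩) (G.fac_nonzero _)
      obtain ⟨mA, hmA, hZA⟩ := σ.central 1 A hA1 hAnz
      have hQim : (σ.Z (Q⟦(-1 : ℤ)⟧)).im = 0 := by
        by_cases hz : IsZero (Q⟦(-1 : ℤ)⟧)
        · rw [Z_isZero C σ hz]; rfl
        · obtain ⟨m, hm, hZQ⟩ := σ.central 0 _ hQneg hz
          rw [hZQ, mul_exp_im m 0, mul_zero, Real.sin_zero, mul_zero]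
      have him := congrArg Complex.im hZ
      rw [hZ1, hZA, Complex.add_im, hQim] at him
      rw [mul_exp_im m1 φ, mul_exp_im mA 1, mul_one, Real.sin_pi, mul_zero,
        add_zero] at him
      have hsinpos : 0 < Real.sin (Real.pi * φ) := by
        refine Real.sin_pos_of_pos_of_lt_pi (mul_pos Real.pi_pos hpos) ?_
        nlinarith [Real.pi_pos]
      nlinarith
    · -- `φ = 1` : contradiction with stability of `A`
      rcases hAstable _ _ (ι ≫ g) p w hQtri (hφeq ▸ G.fac_mem ⟨0, hGn⟩) hQ1 with h1 | h2
      · exact G.fac_nonzero _ h1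
      · have hi : IsIso (ι ≫ g) := (Triangle.isZero₃_iff_isIso₁ _ hQtri).mp h2
        apply hf
        have hgf : g ≫ f = 0 := comp_distTriang_mor_zero₁₂ _ htri
        calc f = inv (ι ≫ g) ≫ ((ι ≫ g) ≫ f) := by simp
          _ = inv (ι ≫ g) ≫ (ι ≫ (g ≫ f)) := by rw [Category.assoc]
          _ = 0 := by rw [hgf, comp_zero, comp_zero]
  refine HN_mem_of_const C σ hXz G (fun j => le_antisymm ?_ (hXbot j))
  exact le_trans (G.phase_strictAnti.antitone (Fin.le_def.mpr (by simp))) hXtop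
end

section
/- Let A be an abelian category and Z : K(A) → ℂ a stability function on A such that the image of the composite Im ∘ Z : K(A) → ℝ (imaginary part of the central charge) is a discrete subgroup of ℝ. Then there is no infinite chain of subobjects ⋯ ⊂ E_{i+1} ⊂ E_i ⊂ ⋯ ⊂ E₁ ⊂ E₀ in A, with each inclusion E_{i+1} ⊂ E_i proper, such that φ(E_{i+1}) > φ(E_i) for all i, where φ(E) ∈ (0,1] denotes the phase of a nonzero object E. -/
/-!
STATEMENT 17: for a stability function on an abelian category whose central charge has
discrete imaginary part, there is no infinite chain of proper subobjects with strictly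
increasing phases.
-/

open CategoryTheory CategoryTheory.Limits

universe v u

variable (𝒜 : Type u) [Category.{v} 𝒜] [Abelian 𝒜]

/-- The phase `φ(E) ∈ (0,1]` of a nonzero object `E` with `Z(E) = m·exp(iπφ(E))`, `m > 0`:
`φ(E) = arg(Z(E))/π`. -/
noncomputable def phaseOf (z : ℂ) : ℝ := Complex.arg z / Real.pi

private lemma cast_piphi (φ : ℝ) :
    ((Real.pi : ℂ) * φ * Complex.I) = ((Real.pi * φ : ℝ) : ℂ) * Complex.I := by
  push_cast; ring

private lemma im_mexp (m φ : ℝ) :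
    ((m : ℂ) * Complex.exp (Real.pi * φ * Complex.I)).im = m * Real.sin (Real.pi * φ) := by
  rw [cast_piphi, Complex.exp_mul_I]
  simp only [Complex.add_im, Complex.mul_im, Complex.mul_re, Complex.ofReal_re,
    Complex.ofReal_im, Complex.I_re, Complex.I_im, Complex.cos_ofReal_re, Complex.cos_ofReal_im,
    Complex.sin_ofReal_re, Complex.sin_ofReal_im]
  ring

private lemma re_mexp (m φ : ℝ) :
    ((m : ℂ) * Complex.exp (Real.pi * φ * Complex.I)).re = m * Real.cos (Real.pi * φ) := by
  rw [cast_piphi, Complex.exp_mul_I]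
  simp only [Complex.add_re, Complex.add_im, Complex.mul_im, Complex.mul_re, Complex.ofReal_re,
    Complex.ofReal_im, Complex.I_re, Complex.I_im, Complex.cos_ofReal_re, Complex.cos_ofReal_im,
    Complex.sin_ofReal_re, Complex.sin_ofReal_im]
  ring

private lemma phase_mexp (m φ : ℝ) (hm : 0 < m) (h0 : 0 < φ) (h1 : φ ≤ 1) :
    phaseOf ((m : ℂ) * Complex.exp (Real.pi * φ * Complex.I)) = φ := by
  unfold phaseOf
  rw [cast_piphi, Complex.arg_real_mul _ hm, Complex.exp_mul_I]
  rw [Complex.arg_cos_add_sin_mul_I (θ := Real.pi * φ)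
    ⟨by nlinarith [Real.pi_pos, mul_pos Real.pi_pos h0],
     by nlinarith [Real.pi_pos, mul_pos Real.pi_pos h0]⟩]
  field_simp

private lemma quot_lemma {𝒜 : Type u} [Category.{v} 𝒜] [Abelian 𝒜] {X Y : 𝒜} (f : X ⟶ Y)
    [Mono f] (h : ¬ IsIso f)
    (Z : 𝒜 → ℂ) (hadd : ∀ S : ShortComplex 𝒜, S.ShortExact → Z S.X₂ = Z S.X₁ + Z S.X₃) :
    Z Y = Z X + Z (cokernel f) ∧ ¬ IsZero (cokernel f) := by
  constructor
  · exact hadd (ShortComplex.mk f (cokernel.π f) (cokernel.condition f))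
      (ShortComplex.ShortExact.mk' (ShortComplex.exact_of_g_is_cokernel _ (cokernelIsCokernel f))
        inferInstance inferInstance)
  · intro hz
    haveI : Epi f := CategoryTheory.Abelian.epi_of_cokernel_π_eq_zero f (hz.eq_zero_of_tgt _)
    exact h (isIso_of_mono_of_epi f)

theorem no_increasing_phase_chain_of_discrete_imaginary_part (Z : 𝒜 → ℂ)
    -- `Z` is additive on short exact sequences, i.e. induces a homomorphism `K(𝒜) → ℂ`:
    (hadd : ∀ S : ShortComplex 𝒜, S.ShortExact → Z S.X₂ = Z S.X₁ + Z S.X₃)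
    -- `Z` is a stability function: every nonzero object has `Z(E) = m·exp(iπφ)` with
    -- `m > 0` and `φ ∈ (0,1]`:
    (hsf : ∀ E : 𝒜, ¬ IsZero E → ∃ m φ : ℝ, 0 < m ∧ 0 < φ ∧ φ ≤ 1 ∧
      Z E = m * Complex.exp (Real.pi * φ * Complex.I))
    -- the image of `Im ∘ Z : K(𝒜) → ℝ` is a discrete subgroup of `ℝ`:
    (hdisc : ∃ δ : ℝ, 0 < δ ∧
      ∀ r ∈ AddSubgroup.closure (Set.range fun E : 𝒜 => (Z E).im), r ≠ 0 → δ ≤ |r|) :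
    -- then there is no infinite chain `⋯ ⊂ E_{i+1} ⊂ E_i ⊂ ⋯ ⊂ E₁ ⊂ E₀` of proper
    -- subobjects with strictly increasing phases:
    ¬ ∃ (E : ℕ → 𝒜) (f : ∀ i : ℕ, E (i + 1) ⟶ E i),
      (∀ i : ℕ, Mono (f i)) ∧ (∀ i : ℕ, ¬ IsIso (f i)) ∧ (∀ i : ℕ, ¬ IsZero (E i)) ∧
      (∀ i : ℕ, phaseOf (Z (E i)) < phaseOf (Z (E (i + 1)))) := by
  rintro ⟨E, f, hmono, hniso, hnz, hphase⟩
  obtain ⟨δ, hδ, hd⟩ := hdisc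
  -- imaginary parts are nonnegative
  have him : ∀ i : ℕ, 0 ≤ (Z (E i)).im := by
    intro i
    obtain ⟨m, φ, hm, h0, h1, h⟩ := hsf _ (hnz i)
    rw [h, im_mexp]
    exact mul_nonneg hm.le (Real.sin_nonneg_of_nonneg_of_le_pi
      (mul_nonneg Real.pi_pos.le h0.le) (by nlinarith [Real.pi_pos]))
  -- key: each step drops the imaginary part by at least δ
  have key : ∀ i : ℕ, δ ≤ (Z (E i)).im - (Z (E (i + 1))).im := by
    intro i
    haveI := hmono i
    obtain ⟨hZ, hQ⟩ := quot_lemma (f i) (hniso i) Z hadd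
    obtain ⟨μ, ψ, hμ, hψ0, hψ1, hq⟩ := hsf _ hQ
    obtain ⟨m₁, φ₁, hm₁, hφ₁0, hφ₁1, h₁⟩ := hsf _ (hnz i)
    obtain ⟨m₂, φ₂, hm₂, hφ₂0, hφ₂1, h₂⟩ := hsf _ (hnz (i + 1))
    have hph : φ₁ < φ₂ := by
      have := hphase i
      rwa [h₁, h₂, phase_mexp _ _ hm₁ hφ₁0 hφ₁1, phase_mexp _ _ hm₂ hφ₂0 hφ₂1] at this
    have hQim : (Z (cokernel (f i))).im = μ * Real.sin (Real.pi * ψ) := by rw [hq, im_mexp]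
    have hQim_nonneg : 0 ≤ (Z (cokernel (f i))).im := by
      rw [hQim]
      exact mul_nonneg hμ.le (Real.sin_nonneg_of_nonneg_of_le_pi
        (mul_nonneg Real.pi_pos.le hψ0.le) (by nlinarith [Real.pi_pos]))
    have hdiff : (Z (E i)).im - (Z (E (i + 1))).im = (Z (cokernel (f i))).im := by
      rw [hZ]; simp
    -- the imaginary part of Z(Q) is nonzero
    have hne : (Z (cokernel (f i))).im ≠ 0 := by
      intro h0
      -- then sin(πψ) = 0, so ψ = 1 and Z(Q) = -μ
      have hsinψ : Real.sin (Real.pi * ψ) = 0 := by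
        rw [hQim] at h0
        rcases mul_eq_zero.mp h0 with h | h
        · exact absurd h hμ.ne'
        · exact h
      have hψ1' : ψ = 1 := by
        by_contra hne1
        have : 0 < Real.sin (Real.pi * ψ) :=
          Real.sin_pos_of_pos_of_lt_pi (mul_pos Real.pi_pos hψ0)
            (by nlinarith [Real.pi_pos, lt_of_le_of_ne hψ1 hne1])
        linarith
      have hQre : (Z (cokernel (f i))).re = -μ := by
        rw [hq, re_mexp, hψ1', mul_one, Real.cos_pi]; ring
      -- real and imaginary equations
      have e1 : m₂ * Real.sin (Real.pi * φ₂) = m₁ * Real.sin (Real.pi * φ₁) := by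
        have := congrArg Complex.im hZ
        rw [h₁, h₂] at this
        simp only [Complex.add_im] at this
        rw [im_mexp, im_mexp, h0] at this
        linarith
      have e2 : m₂ * Real.cos (Real.pi * φ₂) = m₁ * Real.cos (Real.pi * φ₁) + μ := by
        have := congrArg Complex.re hZ
        rw [h₁, h₂] at this
        simp only [Complex.add_re] at this
        rw [re_mexp, re_mexp, hQre] at this
        linarith
      -- sin(πφ₁) = 0 would force φ₁ = 1 < φ₂, impossible
      have hs1 : 0 < Real.sin (Real.pi * φ₁) := by
        rcases lt_or_eq_of_le (Real.sin_nonneg_of_nonneg_of_le_pi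
          (mul_nonneg Real.pi_pos.le hφ₁0.le) (by nlinarith [Real.pi_pos])) with h | h
        · exact h
        · exfalso
          have hφ₁1' : φ₁ = 1 := by
            by_contra hne1
            have : 0 < Real.sin (Real.pi * φ₁) :=
              Real.sin_pos_of_pos_of_lt_pi (mul_pos Real.pi_pos hφ₁0)
                (by nlinarith [Real.pi_pos, lt_of_le_of_ne hφ₁1 hne1])
            linarith
          linarith [hφ₂1, hph, hφ₁1'.symm ▸ hph]
      -- sin(π(φ₂ - φ₁)) > 0
      have hsd : 0 < Real.sin (Real.pi * φ₂ - Real.pi * φ₁) :=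
        Real.sin_pos_of_pos_of_lt_pi (by nlinarith [Real.pi_pos])
          (by nlinarith [Real.pi_pos])
      rw [Real.sin_sub] at hsd
      -- algebraic contradiction
      have hid : m₁ * m₂ * (Real.sin (Real.pi * φ₂) * Real.cos (Real.pi * φ₁) -
          Real.cos (Real.pi * φ₂) * Real.sin (Real.pi * φ₁)) = -(m₁ * Real.sin (Real.pi * φ₁) * μ) := by
        linear_combination (m₁ * Real.cos (Real.pi * φ₁)) * e1 -
          (m₁ * Real.sin (Real.pi * φ₁)) * e2
      nlinarith [mul_pos (mul_pos hm₁ hm₂) hsd, mul_pos (mul_pos hm₁ hs1) hμ]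
    -- membership in the subgroup
    have hmem : (Z (cokernel (f i))).im ∈
        AddSubgroup.closure (Set.range fun E : 𝒜 => (Z E).im) :=
      AddSubgroup.subset_closure ⟨cokernel (f i), rfl⟩
    have := hd _ hmem hne
    rw [abs_of_nonneg hQim_nonneg] at this
    linarith [hdiff]
  -- telescoping gives a contradiction
  obtain ⟨n, hn⟩ := exists_nat_gt ((Z (E 0)).im / δ)
  have tele : (Z (E 0)).im - (Z (E n)).im =
      ∑ i ∈ Finset.range n, ((Z (E i)).im - (Z (E (i + 1))).im) :=
    (Finset.sum_range_sub' (fun i => (Z (E i)).im) n).symm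
  have hsum : (n : ℝ) * δ ≤ (Z (E 0)).im - (Z (E n)).im := by
    rw [tele]
    calc (n : ℝ) * δ = ∑ _i ∈ Finset.range n, δ := by
          rw [Finset.sum_const, Finset.card_range, nsmul_eq_mul]
      _ ≤ ∑ i ∈ Finset.range n, ((Z (E i)).im - (Z (E (i + 1))).im) :=
          Finset.sum_le_sum fun i _ => key i
  have hlt : (Z (E 0)).im < (n : ℝ) * δ := by
    rw [div_lt_iff₀ hδ] at hn
    linarith
  linarith [him n]
end
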